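/- arXiv:1604.04165 — 3 statements merged into one kernel-verified Lean document; each statement's English description precedes it below -/
import Mathlib

section
/- In the coordinate transport setting, for every x ∈ Ω and all indices i, j: Σ_{p,q} Φ^{pq} Φ_{ijpq} − Σ_p W^p Φ_{pij} = −V_{ij} + Ŵ_{ij} + g_{ij}, that is, L[Φ_{ij}] = −V_{ij} + Ŵ_{ij} + g_{ij}, where L is the weighted Laplacian. -/
noncomputable section
open scoped BigOperators
open Filter MeasureTheory

/-- Partial derivative `∂_i f`. -/
def pd {n : ℕ} (f : (Fin n → ℝ) → ℝ) (i : Fin n) : (Fin n → ℝ) → ℝ :=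
  fun x => fderiv ℝ f x (Pi.single i 1)

/-- Second partial derivative `f_{ij}`. -/
def pd2 {n : ℕ} (f : (Fin n → ℝ) → ℝ) (i j : Fin n) : (Fin n → ℝ) → ℝ :=
  pd (pd f i) j

/-- Third partial derivative `f_{ijk}`. -/
def pd3 {n : ℕ} (f : (Fin n → ℝ) → ℝ) (i j k : Fin n) : (Fin n → ℝ) → ℝ :=
  pd (pd2 f i j) k

/-- Fourth partial derivative `f_{ijkl}`. -/
def pd4 {n : ℕ} (f : (Fin n → ℝ) → ℝ) (i j k l : Fin n) : (Fin n → ℝ) → ℝ :=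
  pd (pd3 f i j k) l

/-- Fifth partial derivative. -/
def pd5 {n : ℕ} (f : (Fin n → ℝ) → ℝ) (i j k l m : Fin n) : (Fin n → ℝ) → ℝ :=
  pd (pd4 f i j k l) m

/-- The Hessian matrix `D²Φ(x)`, with entries `Φ_{ij}(x)`. -/
def hess {n : ℕ} (Φ : (Fin n → ℝ) → ℝ) (x : Fin n → ℝ) : Matrix (Fin n) (Fin n) ℝ :=
  Matrix.of fun i j => pd2 Φ i j x

/-- The inverse Hessian matrix, with entries `Φ^{ij}(x)`. -/
def ihess {n : ℕ} (Φ : (Fin n → ℝ) → ℝ) (x : Fin n → ℝ) : Matrix (Fin n) (Fin n) ℝ :=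
  (hess Φ x)⁻¹

/-- The gradient `∇Φ(x)`. -/
def grad {n : ℕ} (Φ : (Fin n → ℝ) → ℝ) (x : Fin n → ℝ) : Fin n → ℝ :=
  fun i => pd Φ i x

/-- The Calabi tensor `g_{ij} = Σ Φ_{iab} Φ_{jcd} Φ^{ac} Φ^{bd}`. -/
def calabi {n : ℕ} (Φ : (Fin n → ℝ) → ℝ) (i j : Fin n) (x : Fin n → ℝ) : ℝ :=
  ∑ a, ∑ b, ∑ c, ∑ d,
    pd3 Φ i a b x * pd3 Φ j c d x * ihess Φ x a c * ihess Φ x b d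

/-- `W^i := (∂_i W)(∇Φ)`. -/
def Wop {n : ℕ} (Φ W : (Fin n → ℝ) → ℝ) (i : Fin n) (x : Fin n → ℝ) : ℝ :=
  pd W i (grad Φ x)

/-- `Ŵ_{ij} := Σ_{a,b} W^{ab} Φ_{ai} Φ_{bj}` where `W^{ab} = (∂²_{ab}W)(∇Φ)`. -/
def What2 {n : ℕ} (Φ W : (Fin n → ℝ) → ℝ) (i j : Fin n) (x : Fin n → ℝ) : ℝ :=
  ∑ a, ∑ b, pd2 W a b (grad Φ x) * pd2 Φ a i x * pd2 Φ b j x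

/-- `Ŵ_{ijk} := Σ_{a,b,c} W^{abc} Φ_{ai} Φ_{bj} Φ_{ck}` where `W^{abc} = (∂³_{abc}W)(∇Φ)`. -/
def What3 {n : ℕ} (Φ W : (Fin n → ℝ) → ℝ) (i j k : Fin n) (x : Fin n → ℝ) : ℝ :=
  ∑ a, ∑ b, ∑ c, pd3 W a b c (grad Φ x) * pd2 Φ a i x * pd2 Φ b j x * pd2 Φ c k x

/-- Christoffel symbols `Γ^k_{pq} = ½ Σ_m Φ^{km} Φ_{mpq}` of the Hessian metric. -/
def Γh {n : ℕ} (Φ : (Fin n → ℝ) → ℝ) (k p q : Fin n) (x : Fin n → ℝ) : ℝ :=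
  (1/2) * ∑ m, ihess Φ x k m * pd3 Φ m p q x

/-- Covariant derivative of a (0,1)-tensor: `(∇T)_{p i}`. -/
def covD1 {n : ℕ} (Φ : (Fin n → ℝ) → ℝ) (T : Fin n → (Fin n → ℝ) → ℝ)
    (p i : Fin n) (x : Fin n → ℝ) : ℝ :=
  pd (T i) p x - ∑ m, Γh Φ m p i x * T m x

/-- Covariant derivative of a (0,2)-tensor: `(∇T)_{p i j}`. -/
def covD2 {n : ℕ} (Φ : (Fin n → ℝ) → ℝ) (T : Fin n → Fin n → (Fin n → ℝ) → ℝ)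
    (p i j : Fin n) (x : Fin n → ℝ) : ℝ :=
  pd (T i j) p x - ∑ m, Γh Φ m p i x * T m j x - ∑ m, Γh Φ m p j x * T i m x

/-- Covariant derivative of a (0,3)-tensor: `(∇T)_{p i j k}`. -/
def covD3 {n : ℕ} (Φ : (Fin n → ℝ) → ℝ) (T : Fin n → Fin n → Fin n → (Fin n → ℝ) → ℝ)
    (p i j k : Fin n) (x : Fin n → ℝ) : ℝ :=
  pd (T i j k) p x - ∑ m, Γh Φ m p i x * T m j k x - ∑ m, Γh Φ m p j x * T i m k x
    - ∑ m, Γh Φ m p k x * T i j m x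

/-- Covariant derivative of a (0,4)-tensor: `(∇T)_{p i j k l}`. -/
def covD4 {n : ℕ} (Φ : (Fin n → ℝ) → ℝ)
    (T : Fin n → Fin n → Fin n → Fin n → (Fin n → ℝ) → ℝ)
    (p i j k l : Fin n) (x : Fin n → ℝ) : ℝ :=
  pd (T i j k l) p x - ∑ m, Γh Φ m p i x * T m j k l x - ∑ m, Γh Φ m p j x * T i m k l x
    - ∑ m, Γh Φ m p k x * T i j m l x - ∑ m, Γh Φ m p l x * T i j k m x

/-- Weighted tensor Laplacian of a (0,1)-tensor:
`(LT)_i = Σ Φ^{pq}(∇∇T)_{pq i} − ½ Σ_p (Σ_m Φ^{pm} V_m + W^p)(∇T)_{p i}`. -/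
def LT1 {n : ℕ} (Φ V W : (Fin n → ℝ) → ℝ) (T : Fin n → (Fin n → ℝ) → ℝ)
    (i : Fin n) (x : Fin n → ℝ) : ℝ :=
  (∑ p, ∑ q, ihess Φ x p q * covD2 Φ (covD1 Φ T) p q i x)
    - (1/2) * ∑ p, ((∑ m, ihess Φ x p m * pd V m x) + Wop Φ W p x) * covD1 Φ T p i x

/-- Weighted tensor Laplacian of a (0,2)-tensor. -/
def LT2 {n : ℕ} (Φ V W : (Fin n → ℝ) → ℝ) (T : Fin n → Fin n → (Fin n → ℝ) → ℝ)
    (i j : Fin n) (x : Fin n → ℝ) : ℝ :=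
  (∑ p, ∑ q, ihess Φ x p q * covD3 Φ (covD2 Φ T) p q i j x)
    - (1/2) * ∑ p, ((∑ m, ihess Φ x p m * pd V m x) + Wop Φ W p x) * covD2 Φ T p i j x

/-- Weighted tensor Laplacian of a (0,3)-tensor. -/
def LT3 {n : ℕ} (Φ V W : (Fin n → ℝ) → ℝ) (T : Fin n → Fin n → Fin n → (Fin n → ℝ) → ℝ)
    (i j k : Fin n) (x : Fin n → ℝ) : ℝ :=
  (∑ p, ∑ q, ihess Φ x p q * covD4 Φ (covD3 Φ T) p q i j k x)
    - (1/2) * ∑ p, ((∑ m, ihess Φ x p m * pd V m x) + Wop Φ W p x) * covD3 Φ T p i j k x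

/-- `N_{piab} := Φ_{piab} − ½ Σ_{k,m} Φ^{km}(Φ_{mpi}Φ_{kab} + Φ_{mpa}Φ_{kib} + Φ_{mpb}Φ_{kia})`. -/
def Ncal {n : ℕ} (Φ : (Fin n → ℝ) → ℝ) (p i a b : Fin n) (x : Fin n → ℝ) : ℝ :=
  pd4 Φ p i a b x - (1/2) * ∑ k, ∑ m, ihess Φ x k m *
    (pd3 Φ m p i x * pd3 Φ k a b x + pd3 Φ m p a x * pd3 Φ k i b x
      + pd3 Φ m p b x * pd3 Φ k i a x)

/-- Riemann curvature `R_{ikjl} := ¼ Σ_{a,m} Φ^{am}(Φ_{ila}Φ_{mkj} − Φ_{ija}Φ_{mkl})`. -/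
def Rcal {n : ℕ} (Φ : (Fin n → ℝ) → ℝ) (i k j l : Fin n) (x : Fin n → ℝ) : ℝ :=
  (1/4) * ∑ a, ∑ m, ihess Φ x a m *
    (pd3 Φ i l a x * pd3 Φ m k j x - pd3 Φ i j a x * pd3 Φ m k l x)

/-- The `h`-norm of a quadratic form `Q` at `x`:
`‖Q‖_h(x) = sup { Σ Q_{ij} v_i v_j : Σ Φ_{ij}(x) v_i v_j = 1 }`. -/
def hnorm {n : ℕ} (Φ : (Fin n → ℝ) → ℝ) (Q : Fin n → Fin n → ℝ) (x : Fin n → ℝ) : ℝ :=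
  sSup {r | ∃ v : Fin n → ℝ,
    (∑ i, ∑ j, pd2 Φ i j x * v i * v j) = 1 ∧ r = ∑ i, ∑ j, Q i j * v i * v j}

/-- The matrix `A(x)` with entries `V_{ab} + Ŵ_{ab}`. -/
def Amat {n : ℕ} (Φ V W : (Fin n → ℝ) → ℝ) (x : Fin n → ℝ) : Matrix (Fin n) (Fin n) ℝ :=
  Matrix.of fun a b => pd2 V a b x + What2 Φ W a b x

/-- The matrix `S_i(x)` with entries `V_{iab} − Ŵ_{iab}`. -/
def Smat {n : ℕ} (Φ V W : (Fin n → ℝ) → ℝ) (i : Fin n) (x : Fin n → ℝ) :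
    Matrix (Fin n) (Fin n) ℝ :=
  Matrix.of fun a b => pd3 V i a b x - What3 Φ W i a b x

/-- `H_{ij}(x) := Tr[A(x)⁻¹ · S_i(x) · (D²Φ(x))⁻¹ · S_j(x)]`. -/
def Hten {n : ℕ} (Φ V W : (Fin n → ℝ) → ℝ) (i j : Fin n) (x : Fin n → ℝ) : ℝ :=
  ((Amat Φ V W x)⁻¹ * Smat Φ V W i x * (hess Φ x)⁻¹ * Smat Φ V W j x).trace

/-- Euclidean operator norm of a matrix. -/
def eOpNorm {n : ℕ} (M : Matrix (Fin n) (Fin n) ℝ) : ℝ :=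
  ‖LinearMap.toContinuousLinearMap (Matrix.toEuclideanLin M)‖

/-- Directional derivative of the Hessian: the matrix `∂_e D²F(x)`. -/
def dirHess {n : ℕ} (F : (Fin n → ℝ) → ℝ) (e : Fin n → ℝ) (x : Fin n → ℝ) :
    Matrix (Fin n) (Fin n) ℝ :=
  Matrix.of fun i j => ∑ k, e k * pd3 F k i j x

/-- The quadratic form `⟨Qy, y⟩`. -/
def qform {n : ℕ} (Q : Matrix (Fin n) (Fin n) ℝ) (y : Fin n → ℝ) : ℝ :=
  ∑ i, ∑ j, Q i j * y j * y i


namespace Stmt3Aux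


lemma pdEq {n : ℕ} {f : (Fin n → ℝ) → ℝ} {L : (Fin n → ℝ) →L[ℝ] ℝ} {x : Fin n → ℝ}
    (h : HasFDerivAt f L x) (i : Fin n) : pd f i x = L (Pi.single i 1) := by
  unfold pd; rw [h.fderiv]

lemma pd_congr_nhds {n : ℕ} {f g : (Fin n → ℝ) → ℝ} {x : Fin n → ℝ}
    (h : f =ᶠ[nhds x] g) (i : Fin n) : pd f i x = pd g i x := by
  unfold pd; rw [h.fderiv_eq]

lemma pd_eqOn {n : ℕ} {Ω : Set (Fin n → ℝ)} (hΩ : IsOpen Ω) {f g : (Fin n → ℝ) → ℝ}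
    (h : ∀ y ∈ Ω, f y = g y) {x : Fin n → ℝ} (hx : x ∈ Ω) (i : Fin n) :
    pd f i x = pd g i x :=
  pd_congr_nhds (Filter.eventuallyEq_of_mem (hΩ.mem_nhds hx) h) i

lemma pd_const {n : ℕ} (c : ℝ) (i : Fin n) (x : Fin n → ℝ) : pd (fun _ => c) i x = 0 := by
  rw [pdEq (hasFDerivAt_const c x) i]; rfl

lemma pd_sub {n : ℕ} {f g : (Fin n → ℝ) → ℝ} {x : Fin n → ℝ}
    (hf : DifferentiableAt ℝ f x) (hg : DifferentiableAt ℝ g x) (i : Fin n) :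
    pd (fun y => f y - g y) i x = pd f i x - pd g i x := by
  rw [pdEq (hf.hasFDerivAt.fun_sub hg.hasFDerivAt) i]
  simp [pd]

lemma pd_mul {n : ℕ} {f g : (Fin n → ℝ) → ℝ} {x : Fin n → ℝ}
    (hf : DifferentiableAt ℝ f x) (hg : DifferentiableAt ℝ g x) (i : Fin n) :
    pd (fun y => f y * g y) i x = pd f i x * g x + f x * pd g i x := by
  rw [pdEq (hf.hasFDerivAt.fun_mul hg.hasFDerivAt) i]
  simp [pd]
  ring

lemma pd_sum {n : ℕ} {ι : Type*} (s : Finset ι) (f : ι → (Fin n → ℝ) → ℝ) {x : Fin n → ℝ}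
    (hf : ∀ a ∈ s, DifferentiableAt ℝ (f a) x) (i : Fin n) :
    pd (fun y => ∑ a ∈ s, f a y) i x = ∑ a ∈ s, pd (f a) i x := by
  rw [pdEq (HasFDerivAt.fun_sum fun a ha => (hf a ha).hasFDerivAt) i]
  simp [pd]

lemma clm_eval {n : ℕ} (L : (Fin n → ℝ) →L[ℝ] ℝ) (v : Fin n → ℝ) :
    L v = ∑ a, L (Pi.single a 1) * v a := by
  have hv : v = ∑ a, v a • (Pi.single a 1 : Fin n → ℝ) := by
    ext b
    simp [Pi.single_apply]
  conv_lhs => rw [hv]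
  rw [map_sum]
  exact Finset.sum_congr rfl fun a _ => by rw [L.map_smul]; simp [mul_comm]

lemma pd_contDiffOn {n : ℕ} {Ω : Set (Fin n → ℝ)} (hΩ : IsOpen Ω) {f : (Fin n → ℝ) → ℝ}
    {m' m : WithTop ℕ∞} (hf : ContDiffOn ℝ m' f Ω) (hm : m + 1 ≤ m') (i : Fin n) :
    ContDiffOn ℝ m (pd f i) Ω :=
  (hf.fderiv_of_isOpen hΩ hm).clm_apply contDiffOn_const

lemma cdAt_of_cdOn {n : ℕ} {Ω : Set (Fin n → ℝ)} (hΩ : IsOpen Ω) {f : (Fin n → ℝ) → ℝ}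
    {m m' : WithTop ℕ∞} (hf : ContDiffOn ℝ m' f Ω) (hm : m ≤ m') {x : Fin n → ℝ}
    (hx : x ∈ Ω) : ContDiffAt ℝ m f x :=
  ((hf x hx).contDiffAt (hΩ.mem_nhds hx)).of_le hm

lemma diffAt_of_cdOn {n : ℕ} {Ω : Set (Fin n → ℝ)} (hΩ : IsOpen Ω) {f : (Fin n → ℝ) → ℝ}
    {m' : WithTop ℕ∞} (hf : ContDiffOn ℝ m' f Ω) (hm : 1 ≤ m') {x : Fin n → ℝ}
    (hx : x ∈ Ω) : DifferentiableAt ℝ f x :=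
  (cdAt_of_cdOn hΩ hf hm hx).differentiableAt one_ne_zero

lemma pd2_symm_at {n : ℕ} {f : (Fin n → ℝ) → ℝ} {x : Fin n → ℝ}
    (hf : ContDiffAt ℝ 2 f x) (i j : Fin n) : pd2 f i j x = pd2 f j i x := by
  have hsym : IsSymmSndFDerivAt ℝ f x := hf.isSymmSndFDerivAt (by simp [minSmoothness_of_isRCLikeNormedField])
  have hdiff : DifferentiableAt ℝ (fderiv ℝ f) x := by
    have h := hf.fderiv_right (m := 1) (by norm_num)
    exact h.differentiableAt one_ne_zero
  have key : ∀ v w : Fin n → ℝ,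
      fderiv ℝ (fun y => fderiv ℝ f y v) x w = fderiv ℝ (fderiv ℝ f) x w v := by
    intro v w
    have h1 : HasFDerivAt (fun y => fderiv ℝ f y v)
        ((ContinuousLinearMap.apply ℝ ℝ v).comp (fderiv ℝ (fderiv ℝ f) x)) x :=
      (ContinuousLinearMap.apply ℝ ℝ v).hasFDerivAt.comp x hdiff.hasFDerivAt
    rw [h1.fderiv]; rfl
  show pd (pd f i) j x = pd (pd f j) i x
  unfold pd
  rw [key, key]
  exact hsym.eq _ _



lemma det_hasFDerivAt {n : ℕ} {M : (Fin n → ℝ) → Matrix (Fin n) (Fin n) ℝ} {x : Fin n → ℝ}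
    (hM : ∀ p q, DifferentiableAt ℝ (fun y => M y p q) x) :
    HasFDerivAt (fun y => (M y).det)
      (∑ σ : Equiv.Perm (Fin n), ((Equiv.Perm.sign σ : ℤ) : ℝ) •
        (∑ i, (∏ i' ∈ Finset.univ.erase i, M x (σ i') i') •
          fderiv ℝ (fun y => M y (σ i) i) x)) x := by
  have h : (fun y => (M y).det)
      = fun y => ∑ σ : Equiv.Perm (Fin n), ((Equiv.Perm.sign σ : ℤ) : ℝ) * ∏ i, M y (σ i) i := by
    funext y; exact Matrix.det_apply' (M y)
  rw [h]
  refine HasFDerivAt.fun_sum fun σ _ => ?_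
  have hp : HasFDerivAt (fun y => ∏ i, M y (σ i) i)
      (∑ i, (∏ i' ∈ Finset.univ.erase i, M x (σ i') i') •
        fderiv ℝ (fun y => M y (σ i) i) x) x :=
    HasFDerivAt.finset_prod (fun i _ => (hM (σ i) i).hasFDerivAt)
  exact hp.const_mul _

lemma pd_det {n : ℕ} {M : (Fin n → ℝ) → Matrix (Fin n) (Fin n) ℝ} {x : Fin n → ℝ}
    (hM : ∀ p q, DifferentiableAt ℝ (fun y => M y p q) x) (j : Fin n) :
    pd (fun y => (M y).det) j x
      = ∑ k, ∑ p, (M x).adjugate k p * pd (fun y => M y p k) j x := by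
  rw [pdEq (det_hasFDerivAt hM) j]
  rw [ContinuousLinearMap.sum_apply]
  simp only [ContinuousLinearMap.smul_apply, ContinuousLinearMap.sum_apply, smul_eq_mul]
  have key : ∀ k : Fin n,
      (∑ σ : Equiv.Perm (Fin n), ((Equiv.Perm.sign σ : ℤ) : ℝ) *
        ((∏ i' ∈ Finset.univ.erase k, M x (σ i') i') *
          fderiv ℝ (fun y => M y (σ k) k) x (Pi.single j 1)))
      = ∑ p, (M x).adjugate k p * pd (fun y => M y p k) j x := by
    intro k
    have h1 : (∑ σ : Equiv.Perm (Fin n), ((Equiv.Perm.sign σ : ℤ) : ℝ) *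
        ((∏ i' ∈ Finset.univ.erase k, M x (σ i') i') *
          fderiv ℝ (fun y => M y (σ k) k) x (Pi.single j 1)))
        = ((M x).updateCol k (fun p => pd (fun y => M y p k) j x)).det := by
      rw [Matrix.det_apply']
      refine Finset.sum_congr rfl fun σ _ => ?_
      rw [← Finset.mul_prod_erase Finset.univ _ (Finset.mem_univ k)]
      rw [Matrix.updateCol_self]
      rw [Finset.prod_congr rfl fun i' hi' =>
        Matrix.updateCol_ne (Finset.ne_of_mem_erase hi')]
      show _ = _ * (pd (fun y => M y (σ k) k) j x * _)
      unfold pd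
      ring
    rw [h1, ← Matrix.cramer_apply, Matrix.cramer_eq_adjugate_mulVec]
    simp [Matrix.mulVec, dotProduct]
  calc (∑ σ : Equiv.Perm (Fin n), ((Equiv.Perm.sign σ : ℤ) : ℝ) *
        ∑ i, (∏ i' ∈ Finset.univ.erase i, M x (σ i') i') *
          fderiv ℝ (fun y => M y (σ i) i) x (Pi.single j 1))
      = ∑ i : Fin n, ∑ σ : Equiv.Perm (Fin n), ((Equiv.Perm.sign σ : ℤ) : ℝ) *
        ((∏ i' ∈ Finset.univ.erase i, M x (σ i') i') *
          fderiv ℝ (fun y => M y (σ i) i) x (Pi.single j 1)) := by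
        simp only [Finset.mul_sum]
        exact Finset.sum_comm
    _ = _ := Finset.sum_congr rfl fun k _ => key k

lemma det_diffAt {n : ℕ} {M : (Fin n → ℝ) → Matrix (Fin n) (Fin n) ℝ} {x : Fin n → ℝ}
    (hM : ∀ p q, DifferentiableAt ℝ (fun y => M y p q) x) :
    DifferentiableAt ℝ (fun y => (M y).det) x := (det_hasFDerivAt hM).differentiableAt

lemma adj_diffAt {n : ℕ} {M : (Fin n → ℝ) → Matrix (Fin n) (Fin n) ℝ} {x : Fin n → ℝ}
    (hM : ∀ p q, DifferentiableAt ℝ (fun y => M y p q) x) (p q : Fin n) :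
    DifferentiableAt ℝ (fun y => (M y).adjugate p q) x := by
  have h : (fun y => (M y).adjugate p q)
      = fun y => ((M y).updateRow q (Pi.single p 1)).det := by
    funext y; rw [Matrix.adjugate_apply]
  rw [h]
  apply det_diffAt
  intro a b
  simp only [Matrix.updateRow_apply]
  by_cases haq : a = q
  · simp only [if_pos haq]; exact differentiableAt_const _
  · simp only [if_neg haq]; exact hM a b

lemma ihess_eq {n : ℕ} (Φ : (Fin n → ℝ) → ℝ) (y : Fin n → ℝ) (p q : Fin n) :
    ihess Φ y p q = ((hess Φ y).det)⁻¹ * (hess Φ y).adjugate p q := by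
  show ((hess Φ y)⁻¹) p q = _
  rw [Matrix.inv_def, Ring.inverse_eq_inv]
  simp [Matrix.smul_apply]

lemma ihess_diffAt {n : ℕ} {Φ : (Fin n → ℝ) → ℝ} {x : Fin n → ℝ}
    (hd : ∀ p q, DifferentiableAt ℝ (pd2 Φ p q) x) (hdet : (hess Φ x).det ≠ 0) (p q : Fin n) :
    DifferentiableAt ℝ (fun y => ihess Φ y p q) x := by
  have h : (fun y => ihess Φ y p q)
      = fun y => ((hess Φ y).det)⁻¹ * (hess Φ y).adjugate p q :=
    funext fun y => ihess_eq Φ y p q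
  rw [h]
  exact ((det_diffAt fun a b => hd a b).inv hdet).mul (adj_diffAt (fun a b => hd a b) p q)



lemma pd_ihess {n : ℕ} {Ω : Set (Fin n → ℝ)} (hΩ : IsOpen Ω) {Φ : (Fin n → ℝ) → ℝ}
    {x : Fin n → ℝ} (hx : x ∈ Ω)
    (hd2 : ∀ p q, DifferentiableAt ℝ (pd2 Φ p q) x)
    (hdet : ∀ y ∈ Ω, IsUnit (hess Φ y).det) (k m j : Fin n) :
    pd (fun y => ihess Φ y k m) j x
      = -∑ p, ∑ q, ihess Φ x k p * pd3 Φ p q j x * ihess Φ x q m := by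
  have hdx : (hess Φ x).det ≠ 0 := by
    intro h0
    exact (by simpa [h0] using (hdet x hx) : ¬ IsUnit (0:ℝ)).elim (by simpa [h0] using hdet x hx)
  have hb : ∀ p : Fin n,
      ∑ q, (pd3 Φ p q j x * ihess Φ x q m
        + pd2 Φ p q x * pd (fun y => ihess Φ y q m) j x) = 0 := by
    intro p
    have hfun : ∀ y ∈ Ω, (∑ q, pd2 Φ p q y * ihess Φ y q m)
        = (fun _ : Fin n → ℝ => if p = m then (1:ℝ) else 0) y := by
      intro y hy
      have h1 : hess Φ y * (hess Φ y)⁻¹ = 1 := Matrix.mul_nonsing_inv _ (hdet y hy)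
      have h2 := congrFun (congrFun h1 p) m
      rw [Matrix.mul_apply] at h2
      simpa [Matrix.one_apply, ihess, hess] using h2
    have ha : pd (fun y => ∑ q, pd2 Φ p q y * ihess Φ y q m) j x = 0 := by
      rw [pd_eqOn hΩ hfun hx j, pd_const]
    have hexp : pd (fun y => ∑ q, pd2 Φ p q y * ihess Φ y q m) j x
        = ∑ q, (pd3 Φ p q j x * ihess Φ x q m
            + pd2 Φ p q x * pd (fun y => ihess Φ y q m) j x) := by
      rw [pd_sum Finset.univ (fun q => fun y => pd2 Φ p q y * ihess Φ y q m)
        (fun q _ => (hd2 p q).mul (ihess_diffAt hd2 hdx q m)) j]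
      exact Finset.sum_congr rfl fun q _ => pd_mul (hd2 p q) (ihess_diffAt hd2 hdx q m) j
    rw [← hexp, ha]
  have hid : ∀ q : Fin n, (∑ p, ihess Φ x k p * pd2 Φ p q x) = if k = q then (1:ℝ) else 0 := by
    intro q
    have h1 : (hess Φ x)⁻¹ * hess Φ x = 1 := Matrix.nonsing_inv_mul _ (hdet x hx)
    have h2 := congrFun (congrFun h1 k) q
    rw [Matrix.mul_apply] at h2
    simpa [Matrix.one_apply, ihess, hess] using h2
  have hT : pd (fun y => ihess Φ y k m) j x
      = ∑ q, (∑ p, ihess Φ x k p * pd2 Φ p q x) * pd (fun y => ihess Φ y q m) j x := by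
    symm
    calc ∑ q, (∑ p, ihess Φ x k p * pd2 Φ p q x) * pd (fun y => ihess Φ y q m) j x
        = ∑ q, (if k = q then (1:ℝ) else 0) * pd (fun y => ihess Φ y q m) j x :=
          Finset.sum_congr rfl fun q _ => by rw [hid q]
      _ = pd (fun y => ihess Φ y k m) j x := by
          simp
  have hc : ∀ p, (∑ q, pd2 Φ p q x * pd (fun y => ihess Φ y q m) j x)
      = -∑ q, pd3 Φ p q j x * ihess Φ x q m := by
    intro p
    have h := hb p
    rw [Finset.sum_add_distrib] at h
    linarith
  rw [hT]
  calc ∑ q, (∑ p, ihess Φ x k p * pd2 Φ p q x) * pd (fun y => ihess Φ y q m) j x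
      = ∑ q, ∑ p, ihess Φ x k p * (pd2 Φ p q x * pd (fun y => ihess Φ y q m) j x) := by
        refine Finset.sum_congr rfl fun q _ => ?_
        rw [Finset.sum_mul]
        exact Finset.sum_congr rfl fun p _ => by ring
    _ = ∑ p, ihess Φ x k p * (∑ q, pd2 Φ p q x * pd (fun y => ihess Φ y q m) j x) := by
        rw [Finset.sum_comm]
        exact Finset.sum_congr rfl fun p _ => by rw [Finset.mul_sum]
    _ = ∑ p, ihess Φ x k p * (-∑ q, pd3 Φ p q j x * ihess Φ x q m) :=
        Finset.sum_congr rfl fun p _ => by rw [hc p]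
    _ = -∑ p, ∑ q, ihess Φ x k p * pd3 Φ p q j x * ihess Φ x q m := by
        conv_rhs => rw [← Finset.sum_neg_distrib]
        refine Finset.sum_congr rfl fun p _ => ?_
        rw [mul_neg, neg_inj, Finset.mul_sum]
        exact Finset.sum_congr rfl fun q _ => by ring

lemma grad_hasFDerivAt {n : ℕ} {Φ : (Fin n → ℝ) → ℝ} {x : Fin n → ℝ}
    (hda : ∀ a, DifferentiableAt ℝ (pd Φ a) x) :
    HasFDerivAt (grad Φ) (ContinuousLinearMap.pi fun a => fderiv ℝ (pd Φ a) x) x := by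
  have h : HasFDerivAt (fun y (k : Fin n) => pd Φ k y)
      (ContinuousLinearMap.pi fun a => fderiv ℝ (pd Φ a) x) x :=
    hasFDerivAt_pi.2 fun a => (hda a).hasFDerivAt
  exact h

lemma pd_comp_grad {n : ℕ} {Φ F : (Fin n → ℝ) → ℝ} {x : Fin n → ℝ}
    (hda : ∀ a, DifferentiableAt ℝ (pd Φ a) x)
    (hF : DifferentiableAt ℝ F (grad Φ x)) (i : Fin n) :
    pd (fun y => F (grad Φ y)) i x = ∑ a, pd F a (grad Φ x) * pd2 Φ a i x := by
  have hg := grad_hasFDerivAt hda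
  have h : HasFDerivAt (fun y => F (grad Φ y))
      ((fderiv ℝ F (grad Φ x)).comp (ContinuousLinearMap.pi fun a => fderiv ℝ (pd Φ a) x)) x :=
    hF.hasFDerivAt.comp x hg
  rw [pdEq h i]
  rw [ContinuousLinearMap.coe_comp', Function.comp_apply]
  have hv : (ContinuousLinearMap.pi fun a => fderiv ℝ (pd Φ a) x) (Pi.single i 1)
      = fun a => pd2 Φ a i x := rfl
  rw [hv, clm_eval]
  exact Finset.sum_congr rfl fun a _ => rfl

lemma comp_grad_diffAt {n : ℕ} {Φ F : (Fin n → ℝ) → ℝ} {x : Fin n → ℝ}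
    (hda : ∀ a, DifferentiableAt ℝ (pd Φ a) x)
    (hF : DifferentiableAt ℝ F (grad Φ x)) :
    DifferentiableAt ℝ (fun y => F (grad Φ y)) x :=
  (hF.hasFDerivAt.comp x (grad_hasFDerivAt hda)).differentiableAt



variable {n : ℕ} {Ω : Set (Fin n → ℝ)} {Φ : (Fin n → ℝ) → ℝ} {x : Fin n → ℝ}

lemma cd1 (hΩ : IsOpen Ω) (hΦ : ContDiffOn ℝ 5 Φ Ω) (a : Fin n) :
    ContDiffOn ℝ 4 (pd Φ a) Ω := pd_contDiffOn hΩ hΦ (by norm_num) a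

lemma cd2 (hΩ : IsOpen Ω) (hΦ : ContDiffOn ℝ 5 Φ Ω) (a b : Fin n) :
    ContDiffOn ℝ 3 (pd2 Φ a b) Ω := pd_contDiffOn hΩ (cd1 hΩ hΦ a) (by norm_num) b

lemma cd3 (hΩ : IsOpen Ω) (hΦ : ContDiffOn ℝ 5 Φ Ω) (a b c : Fin n) :
    ContDiffOn ℝ 2 (pd3 Φ a b c) Ω := pd_contDiffOn hΩ (cd2 hΩ hΦ a b) (by norm_num) c

lemma d1 (hΩ : IsOpen Ω) (hΦ : ContDiffOn ℝ 5 Φ Ω) (hx : x ∈ Ω) (a : Fin n) :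
    DifferentiableAt ℝ (pd Φ a) x := diffAt_of_cdOn hΩ (cd1 hΩ hΦ a) (by norm_num) hx

lemma d2 (hΩ : IsOpen Ω) (hΦ : ContDiffOn ℝ 5 Φ Ω) (hx : x ∈ Ω) (a b : Fin n) :
    DifferentiableAt ℝ (pd2 Φ a b) x := diffAt_of_cdOn hΩ (cd2 hΩ hΦ a b) (by norm_num) hx

lemma d3 (hΩ : IsOpen Ω) (hΦ : ContDiffOn ℝ 5 Φ Ω) (hx : x ∈ Ω) (a b c : Fin n) :
    DifferentiableAt ℝ (pd3 Φ a b c) x := diffAt_of_cdOn hΩ (cd3 hΩ hΦ a b c) (by norm_num) hx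

lemma p2s (hΩ : IsOpen Ω) (hΦ : ContDiffOn ℝ 5 Φ Ω) (hx : x ∈ Ω) (a b : Fin n) :
    pd2 Φ a b x = pd2 Φ b a x :=
  pd2_symm_at (cdAt_of_cdOn hΩ hΦ (by norm_num) hx) a b

lemma p3s23 (hΩ : IsOpen Ω) (hΦ : ContDiffOn ℝ 5 Φ Ω) (hx : x ∈ Ω) (a b c : Fin n) :
    pd3 Φ a b c x = pd3 Φ a c b x :=
  pd2_symm_at (f := pd Φ a) (cdAt_of_cdOn hΩ (cd1 hΩ hΦ a) (by norm_num) hx) b c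

lemma p3s12 (hΩ : IsOpen Ω) (hΦ : ContDiffOn ℝ 5 Φ Ω) (hx : x ∈ Ω) (a b c : Fin n) :
    pd3 Φ a b c x = pd3 Φ b a c x :=
  pd_eqOn hΩ (fun y hy => p2s hΩ hΦ hy a b) hx c

lemma p3rot (hΩ : IsOpen Ω) (hΦ : ContDiffOn ℝ 5 Φ Ω) (hx : x ∈ Ω) (a b c : Fin n) :
    pd3 Φ a b c x = pd3 Φ c a b x := by
  rw [p3s23 hΩ hΦ hx, p3s12 hΩ hΦ hx]

lemma p4s34 (hΩ : IsOpen Ω) (hΦ : ContDiffOn ℝ 5 Φ Ω) (hx : x ∈ Ω) (a b c d : Fin n) :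
    pd4 Φ a b c d x = pd4 Φ a b d c x :=
  pd2_symm_at (f := pd2 Φ a b) (cdAt_of_cdOn hΩ (cd2 hΩ hΦ a b) (by norm_num) hx) c d

lemma p4s23 (hΩ : IsOpen Ω) (hΦ : ContDiffOn ℝ 5 Φ Ω) (hx : x ∈ Ω) (a b c d : Fin n) :
    pd4 Φ a b c d x = pd4 Φ a c b d x :=
  pd_eqOn hΩ (fun y hy => p3s23 hΩ hΦ hy a b c) hx d

lemma p4s12 (hΩ : IsOpen Ω) (hΦ : ContDiffOn ℝ 5 Φ Ω) (hx : x ∈ Ω) (a b c d : Fin n) :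
    pd4 Φ a b c d x = pd4 Φ b a c d x :=
  pd_eqOn hΩ (fun y hy => p3s12 hΩ hΦ hy a b c) hx d

lemma p4pair (hΩ : IsOpen Ω) (hΦ : ContDiffOn ℝ 5 Φ Ω) (hx : x ∈ Ω) (a b c d : Fin n) :
    pd4 Φ a b c d x = pd4 Φ c d a b x := by
  rw [p4s34 hΩ hΦ hx, p4s23 hΩ hΦ hx, p4s12 hΩ hΦ hx, p4s34 hΩ hΦ hx, p4s23 hΩ hΦ hx,
    p4s12 hΩ hΦ hx]

lemma hess_symmM (hΩ : IsOpen Ω) (hΦ : ContDiffOn ℝ 5 Φ Ω) (hx : x ∈ Ω) :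
    (hess Φ x).transpose = hess Φ x := by
  ext p q
  exact p2s hΩ hΦ hx q p

lemma ihess_symm (hΩ : IsOpen Ω) (hΦ : ContDiffOn ℝ 5 Φ Ω) (hx : x ∈ Ω) (p q : Fin n) :
    ihess Φ x p q = ihess Φ x q p := by
  have h1 : ((hess Φ x)⁻¹).transpose = (hess Φ x)⁻¹ := by
    rw [Matrix.transpose_nonsing_inv, hess_symmM hΩ hΦ hx]
  have h2 := congrFun (congrFun h1 q) p
  simpa [Matrix.transpose_apply, ihess] using h2






lemma pd_log {n : ℕ} {f : (Fin n → ℝ) → ℝ} {x : Fin n → ℝ}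
    (hf : DifferentiableAt ℝ f x) (h0 : f x ≠ 0) (i : Fin n) :
    pd (fun y => Real.log (f y)) i x = (f x)⁻¹ * pd f i x := by
  rw [pdEq (hf.hasFDerivAt.log h0) i]
  simp [pd]

section Main

variable {n : ℕ} {Ω : Set (Fin n → ℝ)} {Φ V W : (Fin n → ℝ) → ℝ}

lemma det_pos (hMA : ∀ y ∈ Ω, Real.exp (-V y) = Real.exp (-W (grad Φ y)) * (hess Φ y).det)
    {y : Fin n → ℝ} (hy : y ∈ Ω) : 0 < (hess Φ y).det := by
  have h := hMA y hy
  have h2 : (hess Φ y).det = Real.exp (-V y) / Real.exp (-W (grad Φ y)) :=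
    (eq_div_iff (Real.exp_ne_zero _)).2 (by rw [h]; ring)
  rw [h2]
  exact div_pos (Real.exp_pos _) (Real.exp_pos _)

lemma step1 (hMA : ∀ y ∈ Ω, Real.exp (-V y) = Real.exp (-W (grad Φ y)) * (hess Φ y).det)
    {y : Fin n → ℝ} (hy : y ∈ Ω) :
    V y = W (grad Φ y) - Real.log ((hess Φ y).det) := by
  have h := hMA y hy
  have h2 : Real.exp (-V y + W (grad Φ y)) = (hess Φ y).det := by
    rw [Real.exp_add, h, mul_comm (Real.exp (-W (grad Φ y))) ((hess Φ y).det), mul_assoc,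
      ← Real.exp_add]
    simp
  have h3 : Real.log ((hess Φ y).det) = -V y + W (grad Φ y) := by
    rw [← h2, Real.log_exp]
  linarith

lemma step2 (hΩ : IsOpen Ω) (hΦ : ContDiffOn ℝ 5 Φ Ω) (hW : ContDiff ℝ 3 W)
    (hMA : ∀ y ∈ Ω, Real.exp (-V y) = Real.exp (-W (grad Φ y)) * (hess Φ y).det)
    {y : Fin n → ℝ} (hy : y ∈ Ω) (i : Fin n) :
    pd V i y = (∑ a, Wop Φ W a y * pd2 Φ a i y)
      - ∑ p, ∑ q, ihess Φ y p q * pd3 Φ q p i y := by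
  have hVe : ∀ z ∈ Ω, V z
      = (fun z => W (grad Φ z) - Real.log ((hess Φ z).det)) z :=
    fun z hz => step1 hMA hz
  rw [pd_eqOn hΩ hVe hy i]
  have hWd : DifferentiableAt ℝ W (grad Φ y) :=
    (hW.differentiable (by norm_num)) _
  have hda : ∀ a, DifferentiableAt ℝ (pd Φ a) y := fun a => d1 hΩ hΦ hy a
  have hdetd : DifferentiableAt ℝ (fun z => (hess Φ z).det) y :=
    det_diffAt (fun p q => d2 hΩ hΦ hy p q)
  have hdetne : (hess Φ y).det ≠ 0 := ne_of_gt (det_pos hMA hy)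
  rw [pd_sub (f := fun z => W (grad Φ z)) (g := fun z => Real.log ((hess Φ z).det))
    (comp_grad_diffAt hda hWd) (hdetd.log hdetne) i]
  congr 1
  · rw [pd_comp_grad hda hWd i]
    exact Finset.sum_congr rfl fun a _ => rfl
  · rw [pd_log hdetd hdetne i, pd_det (M := hess Φ) (fun p q => d2 hΩ hΦ hy p q) i]
    rw [Finset.mul_sum]
    refine Finset.sum_congr rfl fun k _ => ?_
    rw [Finset.mul_sum]
    refine Finset.sum_congr rfl fun p _ => ?_
    show ((hess Φ y).det)⁻¹ * ((hess Φ y).adjugate k p * pd3 Φ p k i y)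
        = ihess Φ y k p * pd3 Φ p k i y
    rw [ihess_eq]
    ring

lemma hV2 (hΩ : IsOpen Ω) (hΦ : ContDiffOn ℝ 5 Φ Ω) (hW : ContDiff ℝ 3 W)
    (hMA : ∀ y ∈ Ω, Real.exp (-V y) = Real.exp (-W (grad Φ y)) * (hess Φ y).det)
    {x : Fin n → ℝ} (hx : x ∈ Ω) (i j : Fin n) :
    pd2 V i j x = What2 Φ W i j x + (∑ p, Wop Φ W p x * pd3 Φ p i j x) + calabi Φ i j x
      - ∑ p, ∑ q, ihess Φ x p q * pd4 Φ i j p q x := by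
  have hda : ∀ a, DifferentiableAt ℝ (pd Φ a) x := fun a => d1 hΩ hΦ hx a
  have hd2 : ∀ p q, DifferentiableAt ℝ (pd2 Φ p q) x := fun p q => d2 hΩ hΦ hx p q
  have hdetne : (hess Φ x).det ≠ 0 := ne_of_gt (det_pos hMA hx)
  have hdetU : ∀ y ∈ Ω, IsUnit (hess Φ y).det :=
    fun y hy => isUnit_iff_ne_zero.2 (ne_of_gt (det_pos hMA hy))
  have hpdW : ∀ a, ContDiffOn ℝ 2 (pd W a) Set.univ :=
    fun a => pd_contDiffOn isOpen_univ (hW.contDiffOn) (by norm_num) a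
  have hpdWd : ∀ a (z : Fin n → ℝ), DifferentiableAt ℝ (pd W a) z :=
    fun a z => diffAt_of_cdOn isOpen_univ (hpdW a) (by norm_num) (Set.mem_univ z)
  have hWopd : ∀ a, DifferentiableAt ℝ (Wop Φ W a) x :=
    fun a => comp_grad_diffAt hda (hpdWd a _)
  -- replace pd V i by its formula on Ω
  have hVe : ∀ y ∈ Ω, pd V i y = (fun y => (∑ a, Wop Φ W a y * pd2 Φ a i y)
      - ∑ p, ∑ q, ihess Φ y p q * pd3 Φ q p i y) y :=
    fun y hy => step2 hΩ hΦ hW hMA hy i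
  have h0 : pd2 V i j x = pd (fun y => (∑ a, Wop Φ W a y * pd2 Φ a i y)
      - ∑ p, ∑ q, ihess Φ y p q * pd3 Φ q p i y) j x :=
    pd_eqOn hΩ hVe hx j
  rw [h0]
  -- differentiate
  have hE1d : DifferentiableAt ℝ (fun y => ∑ a, Wop Φ W a y * pd2 Φ a i y) x :=
    DifferentiableAt.fun_sum fun a _ => (hWopd a).fun_mul (hd2 a i)
  have hE2d : DifferentiableAt ℝ
      (fun y => ∑ p, ∑ q, ihess Φ y p q * pd3 Φ q p i y) x :=
    DifferentiableAt.fun_sum fun p _ => DifferentiableAt.fun_sum fun q _ =>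
      (ihess_diffAt hd2 hdetne p q).fun_mul (d3 hΩ hΦ hx q p i)
  rw [pd_sub (f := fun y => ∑ a, Wop Φ W a y * pd2 Φ a i y)
    (g := fun y => ∑ p, ∑ q, ihess Φ y p q * pd3 Φ q p i y) hE1d hE2d j]
  -- first piece
  have hP1 : pd (fun y => ∑ a, Wop Φ W a y * pd2 Φ a i y) j x
      = ∑ a, ((∑ b, pd2 W a b (grad Φ x) * pd2 Φ b j x) * pd2 Φ a i x
        + Wop Φ W a x * pd3 Φ a i j x) := by
    rw [pd_sum Finset.univ (fun a => fun y => Wop Φ W a y * pd2 Φ a i y)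
      (fun a _ => (hWopd a).mul (hd2 a i)) j]
    refine Finset.sum_congr rfl fun a _ => ?_
    rw [pd_mul (hWopd a) (hd2 a i) j]
    have hwa : pd (Wop Φ W a) j x = ∑ b, pd2 W a b (grad Φ x) * pd2 Φ b j x := by
      calc pd (Wop Φ W a) j x = pd (fun y => pd W a (grad Φ y)) j x := rfl
        _ = ∑ b, pd (pd W a) b (grad Φ x) * pd2 Φ b j x :=
            pd_comp_grad (F := pd W a) hda (hpdWd a _) j
        _ = ∑ b, pd2 W a b (grad Φ x) * pd2 Φ b j x := rfl
    rw [hwa]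
    rfl
  -- second piece
  have hP2 : pd (fun y => ∑ p, ∑ q, ihess Φ y p q * pd3 Φ q p i y) j x
      = ∑ p, ∑ q, ((-∑ k, ∑ l, ihess Φ x p k * pd3 Φ k l j x * ihess Φ x l q)
          * pd3 Φ q p i x + ihess Φ x p q * pd4 Φ q p i j x) := by
    rw [pd_sum Finset.univ (fun p => fun y => ∑ q, ihess Φ y p q * pd3 Φ q p i y)
      (fun p _ => DifferentiableAt.fun_sum fun q _ =>
        (ihess_diffAt hd2 hdetne p q).fun_mul (d3 hΩ hΦ hx q p i)) j]
    refine Finset.sum_congr rfl fun p _ => ?_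
    rw [pd_sum Finset.univ (fun q => fun y => ihess Φ y p q * pd3 Φ q p i y)
      (fun q _ => (ihess_diffAt hd2 hdetne p q).mul (d3 hΩ hΦ hx q p i)) j]
    refine Finset.sum_congr rfl fun q _ => ?_
    rw [pd_mul (ihess_diffAt hd2 hdetne p q) (d3 hΩ hΦ hx q p i) j,
      pd_ihess hΩ hx hd2 hdetU p q j]
    rfl
  rw [hP1, hP2]
  -- algebraic conversions
  have t1 : (∑ a, ((∑ b, pd2 W a b (grad Φ x) * pd2 Φ b j x) * pd2 Φ a i x))
      = What2 Φ W i j x := by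
    refine Finset.sum_congr rfl fun a _ => ?_
    rw [Finset.sum_mul]
    exact Finset.sum_congr rfl fun b _ => by ring
  have t2 : (∑ p, ∑ q, (-∑ k, ∑ l, ihess Φ x p k * pd3 Φ k l j x * ihess Φ x l q)
        * pd3 Φ q p i x) = -(calabi Φ i j x) := by
    have h1 : (∑ p, ∑ q, (-∑ k, ∑ l, ihess Φ x p k * pd3 Φ k l j x * ihess Φ x l q)
          * pd3 Φ q p i x)
        = -∑ p, ∑ q, ∑ k, ∑ l,
            ihess Φ x p k * pd3 Φ k l j x * ihess Φ x l q * pd3 Φ q p i x := by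
      conv_rhs => rw [← Finset.sum_neg_distrib]
      refine Finset.sum_congr rfl fun p _ => ?_
      conv_rhs => rw [← Finset.sum_neg_distrib]
      refine Finset.sum_congr rfl fun q _ => ?_
      rw [neg_mul, neg_inj, Finset.sum_mul]
      refine Finset.sum_congr rfl fun k _ => ?_
      rw [Finset.sum_mul]
    rw [h1, neg_inj]
    show _ = ∑ a, ∑ b, ∑ c, ∑ d,
      pd3 Φ i a b x * pd3 Φ j c d x * ihess Φ x a c * ihess Φ x b d
    rw [Finset.sum_comm]
    refine Finset.sum_congr rfl fun q _ => ?_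
    refine Finset.sum_congr rfl fun p _ => ?_
    rw [Finset.sum_comm]
    refine Finset.sum_congr rfl fun l _ => ?_
    refine Finset.sum_congr rfl fun k _ => ?_
    have e1 : pd3 Φ q p i x = pd3 Φ i q p x := p3rot hΩ hΦ hx q p i
    have e2 : pd3 Φ k l j x = pd3 Φ j l k x := by
      rw [p3rot hΩ hΦ hx k l j]
      exact p3s23 hΩ hΦ hx j k l
    have e3 : ihess Φ x l q = ihess Φ x q l := ihess_symm hΩ hΦ hx l q
    rw [e1, e2, e3]
    ring
  have hsplit : (∑ p, ∑ q, ((-∑ k, ∑ l, ihess Φ x p k * pd3 Φ k l j x * ihess Φ x l q)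
        * pd3 Φ q p i x + ihess Φ x p q * pd4 Φ q p i j x))
      = (∑ p, ∑ q, (-∑ k, ∑ l, ihess Φ x p k * pd3 Φ k l j x * ihess Φ x l q)
          * pd3 Φ q p i x)
        + ∑ p, ∑ q, ihess Φ x p q * pd4 Φ q p i j x := by
    rw [← Finset.sum_add_distrib]
    exact Finset.sum_congr rfl fun p _ => Finset.sum_add_distrib
  have t3 : (∑ p, ∑ q, ihess Φ x p q * pd4 Φ q p i j x)
      = ∑ p, ∑ q, ihess Φ x p q * pd4 Φ i j p q x := by
    refine Finset.sum_congr rfl fun p _ => Finset.sum_congr rfl fun q _ => ?_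
    rw [p4s12 hΩ hΦ hx q p i j, p4pair hΩ hΦ hx p q i j]
  rw [Finset.sum_add_distrib, t1, hsplit, t2, t3]
  ring

end Main

end Stmt3Aux

/-- `L[Φ_{ij}] = −V_{ij} + Ŵ_{ij} + g_{ij}`. -/
theorem stmt_3 {n : ℕ} (Ω : Set (Fin n → ℝ)) (hΩ : IsOpen Ω)
    (Φ V W : (Fin n → ℝ) → ℝ)
    (hΦ : ContDiffOn ℝ 5 Φ Ω) (hΦconv : ConvexOn ℝ Ω Φ)
    (hpos : ∀ x ∈ Ω, (hess Φ x).PosDef)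
    (hV : ContDiffOn ℝ 3 V Ω) (hW : ContDiff ℝ 3 W)
    (hMA : ∀ x ∈ Ω, Real.exp (-V x) = Real.exp (-W (grad Φ x)) * (hess Φ x).det) :
    ∀ x ∈ Ω, ∀ i j : Fin n,
      (∑ p, ∑ q, ihess Φ x p q * pd4 Φ i j p q x)
        - (∑ p, Wop Φ W p x * pd3 Φ p i j x)
      = -(pd2 V i j x) + What2 Φ W i j x + calabi Φ i j x := by
  intro x hx i j
  rw [Stmt3Aux.hV2 hΩ hΦ hW hMA hx i j]
  ring
end
end

section
/- In the coordinate transport setting (with Φ of class C⁵ and V, W of class C³), for every x ∈ Ω and all indices i, j, k: L[Φ_{ijk}] = −V_{ijk} + Ŵ_{ijk} + (Σ_{s,a} W^{sa} Φ_{ai} Φ_{sjk} + Σ_{s,a} W^{sa} Φ_{aj} Φ_{sik} + Σ_{s,a} W^{sa} Φ_{ak} Φ_{sij}) + (Σ Φ_{abi} Φ^{ap} Φ^{bq} Φ_{pqjk} + Σ Φ_{abj} Φ^{ap} Φ^{bq} Φ_{pqik} + Σ Φ_{abk} Φ^{ap} Φ^{bq} Φ_{pqij}) − 2 Σ Φ_{pbi}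 Φ_{qcj} Φ_{rak} Φ^{ap} Φ^{bq} Φ^{cr}, where L is the weighted Laplacian applied to the scalar function Φ_{ijk} with fixed indices. -/
noncomputable section
open scoped BigOperators
open Filter MeasureTheory

variable {n : ℕ} {f g : (Fin n → ℝ) → ℝ} {x : Fin n → ℝ} {Ω : Set (Fin n → ℝ)}

lemma pd_congr_nhds (h : f =ᶠ[nhds x] g) (i : Fin n) : pd f i x = pd g i x := by
  unfold pd; rw [Filter.EventuallyEq.fderiv_eq h]

lemma pd_eqOn (hΩ : IsOpen Ω) (h : Set.EqOn f g Ω) (i : Fin n) :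
    Set.EqOn (pd f i) (pd g i) Ω := fun x hx =>
  pd_congr_nhds (Filter.eventuallyEq_of_mem (hΩ.mem_nhds hx) h) i

lemma pd_add (hf : DifferentiableAt ℝ f x) (hg : DifferentiableAt ℝ g x) (i : Fin n) :
    pd (fun y => f y + g y) i x = pd f i x + pd g i x := by
  unfold pd; rw [fderiv_fun_add hf hg]; rfl

lemma pd_sub (hf : DifferentiableAt ℝ f x) (hg : DifferentiableAt ℝ g x) (i : Fin n) :
    pd (fun y => f y - g y) i x = pd f i x - pd g i x := by
  unfold pd; rw [fderiv_fun_sub hf hg]; rfl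

lemma pd_neg (i : Fin n) : pd (fun y => -f y) i x = -pd f i x := by
  unfold pd; rw [fderiv_fun_neg]; rfl

lemma pd_const (c : ℝ) (i : Fin n) : pd (fun _ => c) i x = 0 := by
  unfold pd; rw [fderiv_fun_const]; rfl

lemma pd_mul (hf : DifferentiableAt ℝ f x) (hg : DifferentiableAt ℝ g x) (i : Fin n) :
    pd (fun y => f y * g y) i x = pd f i x * g x + f x * pd g i x := by
  unfold pd; rw [fderiv_fun_mul hf hg]; simp; ring

lemma pd_sum {ι : Type*} {s : Finset ι} {F : ι → (Fin n → ℝ) → ℝ}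
    (h : ∀ j ∈ s, DifferentiableAt ℝ (F j) x) (i : Fin n) :
    pd (fun y => ∑ j ∈ s, F j y) i x = ∑ j ∈ s, pd (F j) i x := by
  unfold pd; rw [fderiv_fun_sum h]; simp

lemma pd_const_mul (hg : DifferentiableAt ℝ g x) (c : ℝ) (i : Fin n) :
    pd (fun y => c * g y) i x = c * pd g i x := by
  unfold pd; rw [fderiv_const_mul hg]; rfl

lemma diff_prod {ι : Type*} [DecidableEq ι] {s : Finset ι} {F : ι → (Fin n → ℝ) → ℝ}
    (h : ∀ j ∈ s, DifferentiableAt ℝ (F j) x) :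
    DifferentiableAt ℝ (fun y => ∏ j ∈ s, F j y) x := by
  classical
  induction s using Finset.induction_on with
  | empty => simpa using differentiableAt_const (1:ℝ)
  | insert a s hns ih =>
    simp only [Finset.prod_insert hns]
    exact (h a (Finset.mem_insert_self a s)).fun_mul
      (ih fun j hj => h j (Finset.mem_insert_of_mem hj))

lemma pd_prod {ι : Type*} [DecidableEq ι] {s : Finset ι} {F : ι → (Fin n → ℝ) → ℝ}
    (h : ∀ j ∈ s, DifferentiableAt ℝ (F j) x) (i : Fin n) :
    pd (fun y => ∏ j ∈ s, F j y) i x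
      = ∑ j ∈ s, pd (F j) i x * ∏ l ∈ s.erase j, F l x := by
  classical
  induction s using Finset.induction_on with
  | empty => simpa using pd_const 1 i
  | insert a s hns ih =>
    simp only [Finset.prod_insert hns]
    rw [pd_mul (h a (Finset.mem_insert_self a s))
      (diff_prod fun j hj => h j (Finset.mem_insert_of_mem hj)),
      Finset.sum_insert hns, ih (fun j hj => h j (Finset.mem_insert_of_mem hj)),
      Finset.erase_insert hns, Finset.mul_sum]
    congr 1
    refine Finset.sum_congr rfl fun j hj => ?_
    rw [Finset.erase_insert_of_ne (by rintro rfl; exact hns hj),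
      Finset.prod_insert (fun hc => hns (Finset.mem_of_mem_erase hc))]
    ring

lemma pd_contDiffOn (hΩ : IsOpen Ω) {m k : WithTop ℕ∞}
    (hf : ContDiffOn ℝ m f Ω) (h : k + 1 ≤ m) (i : Fin n) : ContDiffOn ℝ k (pd f i) Ω :=
  by
  have h2 := (ContinuousLinearMap.apply ℝ ℝ (Pi.single i 1)).contDiff.comp_contDiffOn
    (hf.fderiv_of_isOpen hΩ h)
  exact h2

lemma pd_contDiff {m k : WithTop ℕ∞} (hf : ContDiff ℝ m f) (h : k + 1 ≤ m) (i : Fin n) :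
    ContDiff ℝ k (pd f i) := by
  have := (ContinuousLinearMap.apply ℝ ℝ (Pi.single i 1)).contDiff.comp (hf.fderiv_right h)
  exact this

lemma pd2_symm (hΩ : IsOpen Ω) {m : WithTop ℕ∞} (hf : ContDiffOn ℝ m f Ω) (hm : 2 ≤ m)
    (hx : x ∈ Ω) (a b : Fin n) : pd2 f a b x = pd2 f b a x := by
  have hmem := hΩ.mem_nhds hx
  have h1m : (1 : WithTop ℕ∞) ≤ m := le_trans (by norm_num) hm
  have hev : ∀ᶠ y in nhds x, HasFDerivAt f (fderiv ℝ f y) y := by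
    filter_upwards [hΩ.eventually_mem hx] with y hy
    exact ((hf.contDiffAt (hΩ.mem_nhds hy)).differentiableAt (zero_lt_one.trans_le h1m).ne').hasFDerivAt
  have hf1 : ContDiffOn ℝ 1 (fderiv ℝ f) Ω := hf.fderiv_of_isOpen hΩ (by exact_mod_cast hm)
  have hder : HasFDerivAt (fderiv ℝ f) (fderiv ℝ (fderiv ℝ f) x) x :=
    ((hf1.contDiffAt hmem).differentiableAt one_ne_zero).hasFDerivAt
  have key := second_derivative_symmetric_of_eventually hev hder
    (Pi.single b 1) (Pi.single a 1)
  have eval : ∀ c d : Fin n, pd2 f c d x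
      = (fderiv ℝ (fderiv ℝ f) x (Pi.single d 1)) (Pi.single c 1) := by
    intro c d
    have h2 : HasFDerivAt (fun y => fderiv ℝ f y (Pi.single c 1))
        ((ContinuousLinearMap.apply ℝ ℝ (Pi.single c 1)).comp
          (fderiv ℝ (fderiv ℝ f) x)) x :=
      ((ContinuousLinearMap.apply ℝ ℝ (Pi.single c 1)).hasFDerivAt.comp x hder :)
    show pd (pd f c) d x = _
    unfold pd
    rw [h2.fderiv]
    rfl
  rw [eval a b, eval b a, key]
variable {F : (Fin n → ℝ) → ℝ}

lemma clm_apply_eq_sum (L : (Fin n → ℝ) →L[ℝ] ℝ) (v : Fin n → ℝ) :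
    L v = ∑ s, v s * L (Pi.single s 1) := by
  have hv : v = ∑ s, Pi.single s (v s) := (Finset.univ_sum_single v).symm
  conv_lhs => rw [hv]
  rw [map_sum]
  refine Finset.sum_congr rfl fun s _ => ?_
  have : Pi.single s (v s) = v s • (Pi.single s (1:ℝ) : Fin n → ℝ) := by
    funext j
    by_cases h : j = s <;> simp [Pi.single_apply, h]
  rw [this, ContinuousLinearMap.map_smul, smul_eq_mul]

lemma pd_comp_grad (hF : DifferentiableAt ℝ F (grad Φ x))
    (hd : ∀ s, DifferentiableAt ℝ (pd Φ s) x) (i : Fin n) :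
    pd (fun y => F (grad Φ y)) i x = ∑ s, pd2 Φ s i x * pd F s (grad Φ x) := by
  have hg : DifferentiableAt ℝ (grad Φ) x := differentiableAt_pi.mpr hd
  have hcomp : pd (fun y => F (grad Φ y)) i x
      = fderiv ℝ F (grad Φ x) (fderiv ℝ (grad Φ) x (Pi.single i 1)) := by
    show fderiv ℝ (F ∘ grad Φ) x (Pi.single i 1) = _
    rw [fderiv_comp x hF hg]; rfl
  rw [hcomp, clm_apply_eq_sum]
  refine Finset.sum_congr rfl fun s _ => ?_
  congr 1
  have : fderiv ℝ (grad Φ) x = ContinuousLinearMap.pi fun s => fderiv ℝ (pd Φ s) x :=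
    fderiv_pi hd
  rw [this]; rfl
section swaps
variable {n : ℕ} {f : (Fin n → ℝ) → ℝ} {Ω : Set (Fin n → ℝ)} (hΩ : IsOpen Ω)
  {m : WithTop ℕ∞} (hf : ContDiffOn ℝ m f Ω)
include hΩ hf

lemma pd2_symm_eqOn (hm : 2 ≤ m) (a b : Fin n) : Set.EqOn (pd2 f a b) (pd2 f b a) Ω :=
  fun _ hx => pd2_symm hΩ hf hm hx a b

lemma pd3_swap12 (hm : 2 ≤ m) (a b c : Fin n) : Set.EqOn (pd3 f a b c) (pd3 f b a c) Ω :=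
  pd_eqOn hΩ (pd2_symm_eqOn hΩ hf hm a b) c

lemma pd3_swap23 (hm : 3 ≤ m) (a b c : Fin n) : Set.EqOn (pd3 f a b c) (pd3 f a c b) Ω :=
  fun _ hx => pd2_symm hΩ
    (pd_contDiffOn hΩ hf (le_trans (by norm_num : (2:WithTop ℕ∞)+1 ≤ 3) hm) a) le_rfl hx b c

lemma pd4_swap12 (hm : 2 ≤ m) (a b c d : Fin n) :
    Set.EqOn (pd4 f a b c d) (pd4 f b a c d) Ω :=
  pd_eqOn hΩ (pd_eqOn hΩ (pd2_symm_eqOn hΩ hf hm a b) c) d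

lemma pd4_swap23 (hm : 3 ≤ m) (a b c d : Fin n) :
    Set.EqOn (pd4 f a b c d) (pd4 f a c b d) Ω :=
  pd_eqOn hΩ (pd3_swap23 hΩ hf hm a b c) d

lemma pd4_swap34 (hm : 4 ≤ m) (a b c d : Fin n) :
    Set.EqOn (pd4 f a b c d) (pd4 f a b d c) Ω :=
  fun _ hx => pd2_symm hΩ
    (pd_contDiffOn hΩ (pd_contDiffOn hΩ hf (le_trans (by norm_num : (3:WithTop ℕ∞)+1 ≤ 4) hm) a)
      (by norm_num : (2:WithTop ℕ∞)+1 ≤ 3) b) le_rfl hx c d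

lemma pd5_swap12 (hm : 2 ≤ m) (a b c d e : Fin n) :
    Set.EqOn (pd5 f a b c d e) (pd5 f b a c d e) Ω :=
  pd_eqOn hΩ (pd4_swap12 hΩ hf hm a b c d) e

lemma pd5_swap23 (hm : 3 ≤ m) (a b c d e : Fin n) :
    Set.EqOn (pd5 f a b c d e) (pd5 f a c b d e) Ω :=
  pd_eqOn hΩ (pd4_swap23 hΩ hf hm a b c d) e

lemma pd5_swap34 (hm : 4 ≤ m) (a b c d e : Fin n) :
    Set.EqOn (pd5 f a b c d e) (pd5 f a b d c e) Ω :=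
  pd_eqOn hΩ (pd4_swap34 hΩ hf hm a b c d) e

lemma pd5_swap45 (hm : 5 ≤ m) (a b c d e : Fin n) :
    Set.EqOn (pd5 f a b c d e) (pd5 f a b c e d) Ω :=
  fun _ hx => pd2_symm hΩ
    (pd_contDiffOn hΩ (pd_contDiffOn hΩ (pd_contDiffOn hΩ hf
        (le_trans (by norm_num : (4:WithTop ℕ∞)+1 ≤ 5) hm) a)
      (by norm_num : (3:WithTop ℕ∞)+1 ≤ 4) b)
      (by norm_num : (2:WithTop ℕ∞)+1 ≤ 3) c) le_rfl hx d e

lemma pd4_move (hm : 4 ≤ m) (s i j k : Fin n) :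
    Set.EqOn (pd4 f s i j k) (pd4 f i j k s) Ω :=
  ((pd4_swap12 hΩ hf (le_trans (by norm_num) hm) s i j k).trans
    (pd4_swap23 hΩ hf (le_trans (by norm_num) hm) i s j k)).trans
    (pd4_swap34 hΩ hf hm i j s k)

lemma pd5_move (hm : 5 ≤ m) (a b i j k : Fin n) :
    Set.EqOn (pd5 f a b i j k) (pd5 f i j k a b) Ω := by
  have h2 : (2:WithTop ℕ∞) ≤ m := le_trans (by norm_num) hm
  have h3 : (3:WithTop ℕ∞) ≤ m := le_trans (by norm_num) hm
  have h4 : (4:WithTop ℕ∞) ≤ m := le_trans (by norm_num) hm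
  exact ((((((((pd5_swap12 hΩ hf h2 a b i j k).trans
    (pd5_swap23 hΩ hf h3 b a i j k)).trans
    (pd5_swap34 hΩ hf h4 b i a j k)).trans
    (pd5_swap45 hΩ hf hm b i j a k)).trans
    (pd5_swap12 hΩ hf h2 b i j k a)).trans
    (pd5_swap23 hΩ hf h3 i b j k a)).trans
    (pd5_swap34 hΩ hf h4 i j b k a)).trans
    (pd5_swap45 hΩ hf hm i j k b a))

end swaps
section mainsec
variable {n : ℕ} {Ω : Set (Fin n → ℝ)} {Φ V W : (Fin n → ℝ) → ℝ} {x : Fin n → ℝ}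

/-! ### Smoothness atoms -/

lemma cphi4 (hΩ : IsOpen Ω) (hΦ : ContDiffOn ℝ 5 Φ Ω) (i : Fin n) :
    ContDiffOn ℝ 4 (pd Φ i) Ω :=
  pd_contDiffOn hΩ hΦ (by norm_num) i

lemma cphi3 (hΩ : IsOpen Ω) (hΦ : ContDiffOn ℝ 5 Φ Ω) (i j : Fin n) :
    ContDiffOn ℝ 3 (pd2 Φ i j) Ω :=
  pd_contDiffOn hΩ (cphi4 hΩ hΦ i) (by norm_num) j

lemma cphi2 (hΩ : IsOpen Ω) (hΦ : ContDiffOn ℝ 5 Φ Ω) (i j k : Fin n) :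
    ContDiffOn ℝ 2 (pd3 Φ i j k) Ω :=
  pd_contDiffOn hΩ (cphi3 hΩ hΦ i j) (by norm_num) k

lemma cphi1 (hΩ : IsOpen Ω) (hΦ : ContDiffOn ℝ 5 Φ Ω) (i j k l : Fin n) :
    ContDiffOn ℝ 1 (pd4 Φ i j k l) Ω :=
  pd_contDiffOn hΩ (cphi2 hΩ hΦ i j k) (by norm_num) l

lemma dphi1 (hΩ : IsOpen Ω) (hΦ : ContDiffOn ℝ 5 Φ Ω) (hx : x ∈ Ω) (i : Fin n) :
    DifferentiableAt ℝ (pd Φ i) x :=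
  ((cphi4 hΩ hΦ i).contDiffAt (hΩ.mem_nhds hx)).differentiableAt (by norm_num)

lemma dphi2 (hΩ : IsOpen Ω) (hΦ : ContDiffOn ℝ 5 Φ Ω) (hx : x ∈ Ω) (i j : Fin n) :
    DifferentiableAt ℝ (pd2 Φ i j) x :=
  ((cphi3 hΩ hΦ i j).contDiffAt (hΩ.mem_nhds hx)).differentiableAt (by norm_num)

lemma dphi3 (hΩ : IsOpen Ω) (hΦ : ContDiffOn ℝ 5 Φ Ω) (hx : x ∈ Ω) (i j k : Fin n) :
    DifferentiableAt ℝ (pd3 Φ i j k) x :=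
  ((cphi2 hΩ hΦ i j k).contDiffAt (hΩ.mem_nhds hx)).differentiableAt (by norm_num)

lemma dphi4 (hΩ : IsOpen Ω) (hΦ : ContDiffOn ℝ 5 Φ Ω) (hx : x ∈ Ω) (i j k l : Fin n) :
    DifferentiableAt ℝ (pd4 Φ i j k l) x :=
  ((cphi1 hΩ hΦ i j k l).contDiffAt (hΩ.mem_nhds hx)).differentiableAt (by norm_num)

/-! ### Hessian matrix facts -/

lemma hess_apply (y : Fin n → ℝ) (a b : Fin n) : hess Φ y a b = pd2 Φ a b y := rfl

lemma hess_det_unit (hpos : ∀ x ∈ Ω, (hess Φ x).PosDef) (hx : x ∈ Ω) :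
    IsUnit (hess Φ x).det :=
  isUnit_iff_ne_zero.mpr (hpos x hx).det_pos.ne'

lemma hess_transpose (hpos : ∀ x ∈ Ω, (hess Φ x).PosDef) (hx : x ∈ Ω) :
    (hess Φ x).transpose = hess Φ x := by
  have h := (hpos x hx).1
  rw [← Matrix.conjTranspose_eq_transpose_of_trivial]
  exact h

lemma pd2_phi_symm (hpos : ∀ x ∈ Ω, (hess Φ x).PosDef) (hx : x ∈ Ω) (a b : Fin n) :
    pd2 Φ a b x = pd2 Φ b a x := by
  have h := congrFun (congrFun (hess_transpose hpos hx) b) a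
  simpa [Matrix.transpose_apply, hess_apply] using h

lemma KH (hpos : ∀ x ∈ Ω, (hess Φ x).PosDef) (hx : x ∈ Ω) (a c : Fin n) :
    ∑ b, ihess Φ x a b * pd2 Φ b c x = if a = c then 1 else 0 := by
  have h := Matrix.nonsing_inv_mul (hess Φ x) (hess_det_unit hpos hx)
  have h2 := congrFun (congrFun h a) c
  rw [Matrix.mul_apply] at h2
  simpa [Matrix.one_apply, ihess, hess_apply] using h2

lemma HK (hpos : ∀ x ∈ Ω, (hess Φ x).PosDef) (hx : x ∈ Ω) (a c : Fin n) :
    ∑ b, pd2 Φ a b x * ihess Φ x b c = if a = c then 1 else 0 := by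
  have h := Matrix.mul_nonsing_inv (hess Φ x) (hess_det_unit hpos hx)
  have h2 := congrFun (congrFun h a) c
  rw [Matrix.mul_apply] at h2
  simpa [Matrix.one_apply, ihess, hess_apply] using h2

lemma K_symm (hpos : ∀ x ∈ Ω, (hess Φ x).PosDef) (hx : x ∈ Ω) (a b : Fin n) :
    ihess Φ x a b = ihess Φ x b a := by
  have h := Matrix.transpose_nonsing_inv (hess Φ x)
  rw [hess_transpose hpos hx] at h
  have h2 := congrFun (congrFun h b) a
  simpa [Matrix.transpose_apply, ihess] using h2

lemma ihess_eq (y : Fin n → ℝ) (a b : Fin n) :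
    ihess Φ y a b = ((hess Φ y).det)⁻¹ * (hess Φ y).adjugate a b := by
  show ((hess Φ y)⁻¹) a b = _
  rw [Matrix.inv_def, Ring.inverse_eq_inv']
  simp [Matrix.smul_apply, smul_eq_mul]

lemma adjugate_eq_det_ihess (hpos : ∀ x ∈ Ω, (hess Φ x).PosDef) (hx : x ∈ Ω) (a b : Fin n) :
    (hess Φ x).adjugate a b = (hess Φ x).det * ihess Φ x a b := by
  rw [ihess_eq]
  have hne : (hess Φ x).det ≠ 0 := (hpos x hx).det_pos.ne'
  field_simp

/-! ### Differentiability of det, adjugate, inverse entries -/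

lemma det_diff_at {M : (Fin n → ℝ) → Matrix (Fin n) (Fin n) ℝ}
    (h : ∀ i j, DifferentiableAt ℝ (fun y => M y i j) x) :
    DifferentiableAt ℝ (fun y => (M y).det) x := by
  have hfun : (fun y => (M y).det)
      = fun y => ∑ σ : Equiv.Perm (Fin n),
          (((Equiv.Perm.sign σ : ℤˣ) : ℤ) : ℝ) * ∏ i, M y (σ i) i :=
    funext fun y => Matrix.det_apply' (M y)
  rw [hfun]
  exact DifferentiableAt.fun_sum fun σ _ => (diff_prod fun i _ => h (σ i) i).const_mul _

lemma det_hess_diff (hΩ : IsOpen Ω) (hΦ : ContDiffOn ℝ 5 Φ Ω) (hx : x ∈ Ω) :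
    DifferentiableAt ℝ (fun y => (hess Φ y).det) x :=
  det_diff_at fun i j => dphi2 hΩ hΦ hx i j

lemma adj_hess_diff (hΩ : IsOpen Ω) (hΦ : ContDiffOn ℝ 5 Φ Ω) (hx : x ∈ Ω) (a b : Fin n) :
    DifferentiableAt ℝ (fun y => (hess Φ y).adjugate a b) x := by
  have hfun : (fun y => (hess Φ y).adjugate a b)
      = fun y => ((hess Φ y).updateRow b (Pi.single a 1)).det :=
    funext fun y => Matrix.adjugate_apply _ a b
  rw [hfun]
  refine det_diff_at fun i j => ?_
  have : (fun y => ((hess Φ y).updateRow b (Pi.single a 1)) i j)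
      = fun y => if i = b then (Pi.single a (1:ℝ) : Fin n → ℝ) j else pd2 Φ i j y := by
    funext y; rw [Matrix.updateRow_apply]; rfl
  rw [this]
  by_cases h : i = b
  · simp [h]
  · simpa [h] using dphi2 hΩ hΦ hx i j

lemma K_diff (hΩ : IsOpen Ω) (hΦ : ContDiffOn ℝ 5 Φ Ω)
    (hpos : ∀ x ∈ Ω, (hess Φ x).PosDef) (hx : x ∈ Ω) (a b : Fin n) :
    DifferentiableAt ℝ (fun y => ihess Φ y a b) x := by
  have hfun : (fun y => ihess Φ y a b)
      = fun y => ((hess Φ y).det)⁻¹ * (hess Φ y).adjugate a b :=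
    funext fun y => ihess_eq y a b
  rw [hfun]
  exact ((det_hess_diff hΩ hΦ hx).inv (hpos x hx).det_pos.ne').fun_mul (adj_hess_diff hΩ hΦ hx a b)

/-! ### Derivative of the determinant (Jacobi) -/

lemma pd_det (hΩ : IsOpen Ω) (hΦ : ContDiffOn ℝ 5 Φ Ω)
    (hpos : ∀ x ∈ Ω, (hess Φ x).PosDef) (hx : x ∈ Ω) (k : Fin n) :
    pd (fun y => (hess Φ y).det) k x
      = (hess Φ x).det * ∑ a, ∑ b, ihess Φ x a b * pd3 Φ b a k x := by
  have hfun : (fun y => (hess Φ y).det)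
      = fun y => ∑ σ : Equiv.Perm (Fin n),
          (((Equiv.Perm.sign σ : ℤˣ) : ℤ) : ℝ) * ∏ i, pd2 Φ (σ i) i y :=
    funext fun y => Matrix.det_apply' (hess Φ y)
  rw [hfun, pd_sum (fun σ _ => (diff_prod fun i _ => dphi2 hΩ hΦ hx (σ i) i).const_mul _)]
  have step1 : ∀ σ : Equiv.Perm (Fin n),
      pd (fun y => (((Equiv.Perm.sign σ : ℤˣ) : ℤ) : ℝ) * ∏ i, pd2 Φ (σ i) i y) k x
        = (((Equiv.Perm.sign σ : ℤˣ) : ℤ) : ℝ)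
            * ∑ i, pd3 Φ (σ i) i k x * ∏ l ∈ Finset.univ.erase i, pd2 Φ (σ l) l x := by
    intro σ
    rw [pd_const_mul (diff_prod fun i _ => dphi2 hΩ hΦ hx (σ i) i),
      pd_prod (fun i _ => dphi2 hΩ hΦ hx (σ i) i)]
    rfl
  simp only [step1]
  have step2 : ∑ σ : Equiv.Perm (Fin n), (((Equiv.Perm.sign σ : ℤˣ) : ℤ) : ℝ)
        * ∑ i, pd3 Φ (σ i) i k x * ∏ l ∈ Finset.univ.erase i, pd2 Φ (σ l) l x
      = ∑ i, ((hess Φ x).updateCol i (fun r => pd3 Φ r i k x)).det := by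
    have : ∀ i, ((hess Φ x).updateCol i (fun r => pd3 Φ r i k x)).det
        = ∑ σ : Equiv.Perm (Fin n), (((Equiv.Perm.sign σ : ℤˣ) : ℤ) : ℝ)
            * (pd3 Φ (σ i) i k x * ∏ l ∈ Finset.univ.erase i, pd2 Φ (σ l) l x) := by
      intro i
      rw [Matrix.det_apply']
      refine Finset.sum_congr rfl fun σ _ => ?_
      congr 1
      rw [← Finset.mul_prod_erase _ _ (Finset.mem_univ i)]
      congr 1
      · rw [Matrix.updateCol_apply]; simp
      · refine Finset.prod_congr rfl fun l hl => ?_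
        rw [Matrix.updateCol_apply, if_neg (Finset.ne_of_mem_erase hl)]
        rfl
    simp only [this, Finset.mul_sum]
    exact Finset.sum_comm
  rw [step2]
  have step3 : ∀ i, ((hess Φ x).updateCol i (fun r => pd3 Φ r i k x)).det
      = ∑ r, (hess Φ x).adjugate i r * pd3 Φ r i k x := by
    intro i
    rw [← Matrix.cramer_apply, Matrix.cramer_eq_adjugate_mulVec]
    simp [Matrix.mulVec, dotProduct]
  simp only [step3]
  rw [Finset.mul_sum]
  refine Finset.sum_congr rfl fun i _ => ?_
  rw [Finset.mul_sum]
  refine Finset.sum_congr rfl fun r _ => ?_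
  rw [adjugate_eq_det_ihess hpos hx]
  ring

/-! ### Derivative of the inverse Hessian entries -/

lemma pd_K (hΩ : IsOpen Ω) (hΦ : ContDiffOn ℝ 5 Φ Ω)
    (hpos : ∀ x ∈ Ω, (hess Φ x).PosDef) (hx : x ∈ Ω) (a b k : Fin n) :
    pd (fun y => ihess Φ y a b) k x
      = -∑ c, ∑ d, ihess Φ x a c * ihess Φ x d b * pd3 Φ c d k x := by
  have key : ∀ c', ∑ e, pd (fun y => ihess Φ y a e) k x * pd2 Φ e c' x
      = -∑ e, ihess Φ x a e * pd3 Φ e c' k x := by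
    intro c'
    have heq : Set.EqOn (fun y => ∑ e, ihess Φ y a e * pd2 Φ e c' y)
        (fun _ => if a = c' then (1:ℝ) else 0) Ω := fun y hy => KH hpos hy a c'
    have h0 : pd (fun y => ∑ e, ihess Φ y a e * pd2 Φ e c' y) k x = 0 := by
      rw [pd_eqOn hΩ heq k hx, pd_const]
    rw [pd_sum (fun e _ => ((K_diff hΩ hΦ hpos hx a e).fun_mul (dphi2 hΩ hΦ hx e c')))] at h0
    have h1 : ∀ e, pd (fun y => ihess Φ y a e * pd2 Φ e c' y) k x
        = pd (fun y => ihess Φ y a e) k x * pd2 Φ e c' x + ihess Φ x a e * pd3 Φ e c' k x := by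
      intro e
      exact pd_mul (K_diff hΩ hΦ hpos hx a e) (dphi2 hΩ hΦ hx e c') k
    rw [Finset.sum_congr rfl fun e _ => h1 e, Finset.sum_add_distrib] at h0
    linarith [h0]
  have expand : pd (fun y => ihess Φ y a b) k x
      = ∑ c', (∑ e, pd (fun y => ihess Φ y a e) k x * pd2 Φ e c' x) * ihess Φ x c' b := by
    have swap : ∑ c', (∑ e, pd (fun y => ihess Φ y a e) k x * pd2 Φ e c' x) * ihess Φ x c' b
        = ∑ e, pd (fun y => ihess Φ y a e) k x * ∑ c', pd2 Φ e c' x * ihess Φ x c' b := by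
      simp_rw [Finset.sum_mul, Finset.mul_sum]
      rw [Finset.sum_comm]
      exact Finset.sum_congr rfl fun e _ => Finset.sum_congr rfl fun c' _ => by ring
    rw [swap]
    have : ∀ e, ∑ c', pd2 Φ e c' x * ihess Φ x c' b = if e = b then 1 else 0 :=
      fun e => HK hpos hx e b
    simp only [this, mul_ite, mul_one, mul_zero]
    simp
  rw [expand]
  have : ∀ c', (∑ e, pd (fun y => ihess Φ y a e) k x * pd2 Φ e c' x) * ihess Φ x c' b
      = -(∑ e, ihess Φ x a e * pd3 Φ e c' k x) * ihess Φ x c' b := by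
    intro c'; rw [key c']
  rw [Finset.sum_congr rfl fun c' _ => this c']
  have lhs_eq : ∑ c', -(∑ e, ihess Φ x a e * pd3 Φ e c' k x) * ihess Φ x c' b
      = -∑ c', ∑ e, ihess Φ x a e * ihess Φ x c' b * pd3 Φ e c' k x := by
    rw [← Finset.sum_neg_distrib]
    refine Finset.sum_congr rfl fun c' _ => ?_
    rw [neg_mul]
    refine congrArg Neg.neg ?_
    rw [Finset.sum_mul]
    exact Finset.sum_congr rfl fun e _ => by ring
  rw [lhs_eq, neg_inj, Finset.sum_comm]

end mainsec
section mainsec2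
variable {n : ℕ} {Ω : Set (Fin n → ℝ)} {Φ V W : (Fin n → ℝ) → ℝ} {x : Fin n → ℝ}

lemma dV1 (hΩ : IsOpen Ω) (hV : ContDiffOn ℝ 3 V Ω) (hx : x ∈ Ω) :
    DifferentiableAt ℝ V x :=
  ((hV.contDiffAt (hΩ.mem_nhds hx))).differentiableAt (by norm_num)

lemma dV2 (hΩ : IsOpen Ω) (hV : ContDiffOn ℝ 3 V Ω) (hx : x ∈ Ω) (i : Fin n) :
    DifferentiableAt ℝ (pd V i) x :=
  (((pd_contDiffOn (k := 2) hΩ hV (by norm_num) i)).contDiffAt (hΩ.mem_nhds hx)).differentiableAt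
    (by norm_num)

lemma dV3 (hΩ : IsOpen Ω) (hV : ContDiffOn ℝ 3 V Ω) (hx : x ∈ Ω) (i j : Fin n) :
    DifferentiableAt ℝ (pd2 V i j) x :=
  (((pd_contDiffOn (k := 1) hΩ (pd_contDiffOn (k := 2) hΩ hV (by norm_num) i) (by norm_num) j)).contDiffAt
    (hΩ.mem_nhds hx)).differentiableAt (by norm_num)

lemma grad_diff (hΩ : IsOpen Ω) (hΦ : ContDiffOn ℝ 5 Φ Ω) (hx : x ∈ Ω) :
    DifferentiableAt ℝ (grad Φ) x :=
  differentiableAt_pi.mpr fun s => dphi1 hΩ hΦ hx s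

lemma dW0 (hΩ : IsOpen Ω) (hΦ : ContDiffOn ℝ 5 Φ Ω) (hW : ContDiff ℝ 3 W) (hx : x ∈ Ω) :
    DifferentiableAt ℝ (fun y => W (grad Φ y)) x :=
  DifferentiableAt.comp x ((hW.differentiable (by norm_num)).differentiableAt)
    (grad_diff hΩ hΦ hx)

lemma dW1 (hΩ : IsOpen Ω) (hΦ : ContDiffOn ℝ 5 Φ Ω) (hW : ContDiff ℝ 3 W) (hx : x ∈ Ω)
    (s : Fin n) : DifferentiableAt ℝ (Wop Φ W s) x :=
  DifferentiableAt.comp x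
    (((pd_contDiff (k := 2) hW (by norm_num) s).differentiable (by norm_num)).differentiableAt)
    (grad_diff hΩ hΦ hx)

lemma dW2 (hΩ : IsOpen Ω) (hΦ : ContDiffOn ℝ 5 Φ Ω) (hW : ContDiff ℝ 3 W) (hx : x ∈ Ω)
    (s a : Fin n) : DifferentiableAt ℝ (fun y => pd2 W s a (grad Φ y)) x :=
  DifferentiableAt.comp x
    (((pd_contDiff (k := 1) (pd_contDiff (k := 2) hW (by norm_num) s) (by norm_num) a).differentiable
      (by norm_num)).differentiableAt)
    (grad_diff hΩ hΦ hx)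

lemma cg0 (hΩ : IsOpen Ω) (hΦ : ContDiffOn ℝ 5 Φ Ω) (hW : ContDiff ℝ 3 W) (hx : x ∈ Ω)
    (i : Fin n) :
    pd (fun y => W (grad Φ y)) i x = ∑ s, pd2 Φ s i x * Wop Φ W s x :=
  pd_comp_grad ((hW.differentiable (by norm_num)).differentiableAt)
    (fun s => dphi1 hΩ hΦ hx s) i

lemma cg1 (hΩ : IsOpen Ω) (hΦ : ContDiffOn ℝ 5 Φ Ω) (hW : ContDiff ℝ 3 W) (hx : x ∈ Ω)
    (s j : Fin n) :
    pd (Wop Φ W s) j x = ∑ a, pd2 Φ a j x * pd2 W s a (grad Φ x) :=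
  pd_comp_grad (((pd_contDiff (k := 2) hW (by norm_num) s).differentiable
      (by norm_num)).differentiableAt)
    (fun a => dphi1 hΩ hΦ hx a) j

lemma cg2 (hΩ : IsOpen Ω) (hΦ : ContDiffOn ℝ 5 Φ Ω) (hW : ContDiff ℝ 3 W) (hx : x ∈ Ω)
    (s a k : Fin n) :
    pd (fun y => pd2 W s a (grad Φ y)) k x = ∑ c, pd2 Φ c k x * pd3 W s a c (grad Φ x) :=
  pd_comp_grad (((pd_contDiff (k := 1) (pd_contDiff (k := 2) hW (by norm_num) s) (by norm_num) a).differentiable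
      (by norm_num)).differentiableAt)
    (fun c => dphi1 hΩ hΦ hx c) k

lemma pd2W_symm (hW : ContDiff ℝ 3 W) (p : Fin n → ℝ) (s a : Fin n) :
    pd2 W s a p = pd2 W a s p :=
  pd2_symm isOpen_univ (hW.contDiffOn) (by norm_num) (Set.mem_univ p) s a

lemma pd_exp {f : (Fin n → ℝ) → ℝ} (hf : DifferentiableAt ℝ f x) (i : Fin n) :
    pd (fun y => Real.exp (f y)) i x = Real.exp (f x) * pd f i x := by
  unfold pd; rw [fderiv_exp hf]; simp

lemma det_eq_exp (hMA : ∀ x ∈ Ω, Real.exp (-V x)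
      = Real.exp (-W (grad Φ x)) * (hess Φ x).det) :
    Set.EqOn (fun y => (hess Φ y).det) (fun y => Real.exp (W (grad Φ y) - V y)) Ω := by
  intro y hy
  have h := hMA y hy
  have h2 : (hess Φ y).det = Real.exp (-V y) / Real.exp (-W (grad Φ y)) := by
    rw [h]; field_simp
  show (hess Φ y).det = Real.exp (W (grad Φ y) - V y)
  rw [h2, ← Real.exp_sub]
  congr 1
  ring

lemma E1 (hΩ : IsOpen Ω) (hΦ : ContDiffOn ℝ 5 Φ Ω)
    (hpos : ∀ x ∈ Ω, (hess Φ x).PosDef) (hV : ContDiffOn ℝ 3 V Ω) (hW : ContDiff ℝ 3 W)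
    (hMA : ∀ x ∈ Ω, Real.exp (-V x) = Real.exp (-W (grad Φ x)) * (hess Φ x).det)
    (hx : x ∈ Ω) (i : Fin n) :
    ∑ a, ∑ b, ihess Φ x a b * pd3 Φ b a i x
      = (∑ s, pd2 Φ s i x * Wop Φ W s x) - pd V i x := by
  have hD := pd_eqOn hΩ (det_eq_exp hMA) i hx
  rw [pd_det hΩ hΦ hpos hx i] at hD
  have hgV : DifferentiableAt ℝ (fun y => W (grad Φ y) - V y) x :=
    (dW0 hΩ hΦ hW hx).fun_sub (dV1 hΩ hV hx)
  have hR : pd (fun y => Real.exp (W (grad Φ y) - V y)) i x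
      = Real.exp (W (grad Φ x) - V x)
        * ((∑ s, pd2 Φ s i x * Wop Φ W s x) - pd V i x) := by
    rw [pd_exp hgV, pd_sub (dW0 hΩ hΦ hW hx) (dV1 hΩ hV hx), cg0 hΩ hΦ hW hx]
  rw [hR] at hD
  have hdet : (hess Φ x).det = Real.exp (W (grad Φ x) - V x) := det_eq_exp hMA hx
  rw [← hdet] at hD
  exact mul_left_cancel₀ (hpos x hx).det_pos.ne' hD

end mainsec2
section mainsec3
variable {n : ℕ} {Ω : Set (Fin n → ℝ)} {Φ V W : (Fin n → ℝ) → ℝ} {x : Fin n → ℝ}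

lemma E2 (hΩ : IsOpen Ω) (hΦ : ContDiffOn ℝ 5 Φ Ω)
    (hpos : ∀ x ∈ Ω, (hess Φ x).PosDef) (hV : ContDiffOn ℝ 3 V Ω) (hW : ContDiff ℝ 3 W)
    (hMA : ∀ x ∈ Ω, Real.exp (-V x) = Real.exp (-W (grad Φ x)) * (hess Φ x).det)
    (hx : x ∈ Ω) (i j : Fin n) :
    ∑ a, ∑ b, ((-∑ c, ∑ d, ihess Φ x a c * ihess Φ x d b * pd3 Φ c d j x) * pd3 Φ b a i x
        + ihess Φ x a b * pd4 Φ b a i j x)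
      = (∑ s, (pd3 Φ s i j x * Wop Φ W s x
          + pd2 Φ s i x * ∑ a, pd2 Φ a j x * pd2 W s a (grad Φ x)))
        - pd2 V i j x := by
  have hE1 : Set.EqOn (fun y => ∑ a, ∑ b, ihess Φ y a b * pd3 Φ b a i y)
      (fun y => (∑ s, pd2 Φ s i y * Wop Φ W s y) - pd V i y) Ω :=
    fun y hy => E1 hΩ hΦ hpos hV hW hMA hy i
  have hD := pd_eqOn hΩ hE1 j hx
  have hL : pd (fun y => ∑ a, ∑ b, ihess Φ y a b * pd3 Φ b a i y) j x
      = ∑ a, ∑ b, ((-∑ c, ∑ d, ihess Φ x a c * ihess Φ x d b * pd3 Φ c d j x)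
          * pd3 Φ b a i x + ihess Φ x a b * pd4 Φ b a i j x) := by
    rw [pd_sum (fun a _ => DifferentiableAt.fun_sum fun b _ =>
      (K_diff hΩ hΦ hpos hx a b).fun_mul (dphi3 hΩ hΦ hx b a i))]
    refine Finset.sum_congr rfl fun a _ => ?_
    rw [pd_sum (fun b _ => (K_diff hΩ hΦ hpos hx a b).fun_mul (dphi3 hΩ hΦ hx b a i))]
    refine Finset.sum_congr rfl fun b _ => ?_
    rw [pd_mul (K_diff hΩ hΦ hpos hx a b) (dphi3 hΩ hΦ hx b a i),
      pd_K hΩ hΦ hpos hx a b j]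
    rfl
  have hR : pd (fun y => (∑ s, pd2 Φ s i y * Wop Φ W s y) - pd V i y) j x
      = (∑ s, (pd3 Φ s i j x * Wop Φ W s x
          + pd2 Φ s i x * ∑ a, pd2 Φ a j x * pd2 W s a (grad Φ x)))
        - pd2 V i j x := by
    rw [pd_sub (DifferentiableAt.fun_sum fun s _ =>
        (dphi2 hΩ hΦ hx s i).fun_mul (dW1 hΩ hΦ hW hx s)) (dV2 hΩ hV hx i)]
    congr 1
    rw [pd_sum (fun s _ => (dphi2 hΩ hΦ hx s i).fun_mul (dW1 hΩ hΦ hW hx s))]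
    refine Finset.sum_congr rfl fun s _ => ?_
    rw [pd_mul (dphi2 hΩ hΦ hx s i) (dW1 hΩ hΦ hW hx s), cg1 hΩ hΦ hW hx s j]
    rfl
  rw [hL, hR] at hD
  exact hD

end mainsec3
section mainsec4
variable {n : ℕ} {Ω : Set (Fin n → ℝ)} {Φ V W : (Fin n → ℝ) → ℝ} {x : Fin n → ℝ}

lemma dU (hΩ : IsOpen Ω) (hΦ : ContDiffOn ℝ 5 Φ Ω)
    (hpos : ∀ x ∈ Ω, (hess Φ x).PosDef) (hx : x ∈ Ω) (a b j : Fin n) :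
    DifferentiableAt ℝ
      (fun y => -∑ c, ∑ d, ihess Φ y a c * ihess Φ y d b * pd3 Φ c d j y) x :=
  (DifferentiableAt.fun_sum fun c _ => DifferentiableAt.fun_sum fun d _ =>
    ((K_diff hΩ hΦ hpos hx a c).fun_mul (K_diff hΩ hΦ hpos hx d b)).fun_mul
      (dphi3 hΩ hΦ hx c d j)).fun_neg

lemma pd_U (hΩ : IsOpen Ω) (hΦ : ContDiffOn ℝ 5 Φ Ω)
    (hpos : ∀ x ∈ Ω, (hess Φ x).PosDef) (hx : x ∈ Ω) (a b j k : Fin n) :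
    pd (fun y => -∑ c, ∑ d, ihess Φ y a c * ihess Φ y d b * pd3 Φ c d j y) k x
      = -∑ c, ∑ d,
          (((-∑ e, ∑ f, ihess Φ x a e * ihess Φ x f c * pd3 Φ e f k x) * ihess Φ x d b
            + ihess Φ x a c
              * (-∑ e, ∑ f, ihess Φ x d e * ihess Φ x f b * pd3 Φ e f k x))
              * pd3 Φ c d j x
            + ihess Φ x a c * ihess Φ x d b * pd4 Φ c d j k x) := by
  rw [pd_neg, pd_sum (fun c _ => DifferentiableAt.fun_sum fun d _ =>
    ((K_diff hΩ hΦ hpos hx a c).fun_mul (K_diff hΩ hΦ hpos hx d b)).fun_mul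
      (dphi3 hΩ hΦ hx c d j))]
  congr 1
  refine Finset.sum_congr rfl fun c _ => ?_
  rw [pd_sum (fun d _ => ((K_diff hΩ hΦ hpos hx a c).fun_mul (K_diff hΩ hΦ hpos hx d b)).fun_mul
      (dphi3 hΩ hΦ hx c d j))]
  refine Finset.sum_congr rfl fun d _ => ?_
  rw [pd_mul ((K_diff hΩ hΦ hpos hx a c).fun_mul (K_diff hΩ hΦ hpos hx d b))
      (dphi3 hΩ hΦ hx c d j),
    pd_mul (K_diff hΩ hΦ hpos hx a c) (K_diff hΩ hΦ hpos hx d b),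
    pd_K hΩ hΦ hpos hx a c k, pd_K hΩ hΦ hpos hx d b k]
  rfl

lemma E3 (hΩ : IsOpen Ω) (hΦ : ContDiffOn ℝ 5 Φ Ω)
    (hpos : ∀ x ∈ Ω, (hess Φ x).PosDef) (hV : ContDiffOn ℝ 3 V Ω) (hW : ContDiff ℝ 3 W)
    (hMA : ∀ x ∈ Ω, Real.exp (-V x) = Real.exp (-W (grad Φ x)) * (hess Φ x).det)
    (hx : x ∈ Ω) (i j k : Fin n) :
    ∑ a, ∑ b,
      (((-∑ c, ∑ d,
          (((-∑ e, ∑ f, ihess Φ x a e * ihess Φ x f c * pd3 Φ e f k x) * ihess Φ x d b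
              + ihess Φ x a c
                * (-∑ e, ∑ f, ihess Φ x d e * ihess Φ x f b * pd3 Φ e f k x))
                * pd3 Φ c d j x
            + ihess Φ x a c * ihess Φ x d b * pd4 Φ c d j k x))
          * pd3 Φ b a i x
        + (-∑ c, ∑ d, ihess Φ x a c * ihess Φ x d b * pd3 Φ c d j x) * pd4 Φ b a i k x)
      + ((-∑ c, ∑ d, ihess Φ x a c * ihess Φ x d b * pd3 Φ c d k x) * pd4 Φ b a i j x
        + ihess Φ x a b * pd5 Φ b a i j k x))
    = (∑ s, ((pd4 Φ s i j k x * Wop Φ W s x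
          + pd3 Φ s i j x * ∑ a, pd2 Φ a k x * pd2 W s a (grad Φ x))
        + (pd3 Φ s i k x * ∑ a, pd2 Φ a j x * pd2 W s a (grad Φ x)
          + pd2 Φ s i x * ∑ a, (pd3 Φ a j k x * pd2 W s a (grad Φ x)
              + pd2 Φ a j x * ∑ c, pd2 Φ c k x * pd3 W s a c (grad Φ x)))))
      - pd3 V i j k x := by
  have hE2 : Set.EqOn
      (fun y => ∑ a, ∑ b,
        ((-∑ c, ∑ d, ihess Φ y a c * ihess Φ y d b * pd3 Φ c d j y) * pd3 Φ b a i y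
          + ihess Φ y a b * pd4 Φ b a i j y))
      (fun y => (∑ s, (pd3 Φ s i j y * Wop Φ W s y
          + pd2 Φ s i y * ∑ a, pd2 Φ a j y * pd2 W s a (grad Φ y)))
        - pd2 V i j y) Ω :=
    fun y hy => E2 hΩ hΦ hpos hV hW hMA hy i j
  have hD := pd_eqOn hΩ hE2 k hx
  have hL : pd (fun y => ∑ a, ∑ b,
        ((-∑ c, ∑ d, ihess Φ y a c * ihess Φ y d b * pd3 Φ c d j y) * pd3 Φ b a i y
          + ihess Φ y a b * pd4 Φ b a i j y)) k x
      = ∑ a, ∑ b,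
      (((-∑ c, ∑ d,
          (((-∑ e, ∑ f, ihess Φ x a e * ihess Φ x f c * pd3 Φ e f k x) * ihess Φ x d b
              + ihess Φ x a c
                * (-∑ e, ∑ f, ihess Φ x d e * ihess Φ x f b * pd3 Φ e f k x))
                * pd3 Φ c d j x
            + ihess Φ x a c * ihess Φ x d b * pd4 Φ c d j k x))
          * pd3 Φ b a i x
        + (-∑ c, ∑ d, ihess Φ x a c * ihess Φ x d b * pd3 Φ c d j x) * pd4 Φ b a i k x)
      + ((-∑ c, ∑ d, ihess Φ x a c * ihess Φ x d b * pd3 Φ c d k x) * pd4 Φ b a i j x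
        + ihess Φ x a b * pd5 Φ b a i j k x)) := by
    rw [pd_sum (fun a _ => DifferentiableAt.fun_sum fun b _ =>
      ((dU hΩ hΦ hpos hx a b j).fun_mul (dphi3 hΩ hΦ hx b a i)).fun_add
        ((K_diff hΩ hΦ hpos hx a b).fun_mul (dphi4 hΩ hΦ hx b a i j)))]
    refine Finset.sum_congr rfl fun a _ => ?_
    rw [pd_sum (fun b _ =>
      ((dU hΩ hΦ hpos hx a b j).fun_mul (dphi3 hΩ hΦ hx b a i)).fun_add
        ((K_diff hΩ hΦ hpos hx a b).fun_mul (dphi4 hΩ hΦ hx b a i j)))]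
    refine Finset.sum_congr rfl fun b _ => ?_
    rw [pd_add ((dU hΩ hΦ hpos hx a b j).fun_mul (dphi3 hΩ hΦ hx b a i))
      ((K_diff hΩ hΦ hpos hx a b).fun_mul (dphi4 hΩ hΦ hx b a i j)),
      pd_mul (dU hΩ hΦ hpos hx a b j) (dphi3 hΩ hΦ hx b a i),
      pd_mul (K_diff hΩ hΦ hpos hx a b) (dphi4 hΩ hΦ hx b a i j),
      pd_U hΩ hΦ hpos hx a b j k, pd_K hΩ hΦ hpos hx a b k]
    rfl
  have hR : pd (fun y => (∑ s, (pd3 Φ s i j y * Wop Φ W s y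
          + pd2 Φ s i y * ∑ a, pd2 Φ a j y * pd2 W s a (grad Φ y)))
        - pd2 V i j y) k x
      = (∑ s, ((pd4 Φ s i j k x * Wop Φ W s x
          + pd3 Φ s i j x * ∑ a, pd2 Φ a k x * pd2 W s a (grad Φ x))
        + (pd3 Φ s i k x * ∑ a, pd2 Φ a j x * pd2 W s a (grad Φ x)
          + pd2 Φ s i x * ∑ a, (pd3 Φ a j k x * pd2 W s a (grad Φ x)
              + pd2 Φ a j x * ∑ c, pd2 Φ c k x * pd3 W s a c (grad Φ x)))))
      - pd3 V i j k x := by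
    have dinner : ∀ s, DifferentiableAt ℝ
        (fun y => ∑ a, pd2 Φ a j y * pd2 W s a (grad Φ y)) x :=
      fun s => DifferentiableAt.fun_sum fun a _ =>
        (dphi2 hΩ hΦ hx a j).fun_mul (dW2 hΩ hΦ hW hx s a)
    rw [pd_sub (DifferentiableAt.fun_sum fun s _ =>
        ((dphi3 hΩ hΦ hx s i j).fun_mul (dW1 hΩ hΦ hW hx s)).fun_add
          ((dphi2 hΩ hΦ hx s i).fun_mul (dinner s))) (dV3 hΩ hV hx i j)]
    congr 1
    rw [pd_sum (fun s _ =>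
        ((dphi3 hΩ hΦ hx s i j).fun_mul (dW1 hΩ hΦ hW hx s)).fun_add
          ((dphi2 hΩ hΦ hx s i).fun_mul (dinner s)))]
    refine Finset.sum_congr rfl fun s _ => ?_
    rw [pd_add ((dphi3 hΩ hΦ hx s i j).fun_mul (dW1 hΩ hΦ hW hx s))
        ((dphi2 hΩ hΦ hx s i).fun_mul (dinner s)),
      pd_mul (dphi3 hΩ hΦ hx s i j) (dW1 hΩ hΦ hW hx s), cg1 hΩ hΦ hW hx s k,
      pd_mul (dphi2 hΩ hΦ hx s i) (dinner s),
      pd_sum (fun a _ => (dphi2 hΩ hΦ hx a j).fun_mul (dW2 hΩ hΦ hW hx s a))]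
    have hinner : ∀ a : Fin n, pd (fun y => pd2 Φ a j y * pd2 W s a (grad Φ y)) k x
        = pd3 Φ a j k x * pd2 W s a (grad Φ x)
          + pd2 Φ a j x * ∑ c, pd2 Φ c k x * pd3 W s a c (grad Φ x) := by
      intro a
      rw [pd_mul (dphi2 hΩ hΦ hx a j) (dW2 hΩ hΦ hW hx s a), cg2 hΩ hΦ hW hx s a k]
      rfl
    simp only [hinner]
    rfl
  rw [hL, hR] at hD
  exact hD

end mainsec4
section mainsec5
variable {n : ℕ} {Ω : Set (Fin n → ℝ)} {Φ V W : (Fin n → ℝ) → ℝ} {x : Fin n → ℝ}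

lemma sum2_mul {f : Fin n → Fin n → ℝ} (r : ℝ) :
    (∑ c, ∑ d, f c d) * r = ∑ c, ∑ d, f c d * r := by
  rw [Finset.sum_mul]
  exact Finset.sum_congr rfl fun c _ => Finset.sum_mul _ _ _

lemma neg_sum2_mul {f : Fin n → Fin n → ℝ} (r : ℝ) :
    (-∑ c, ∑ d, f c d) * r = ∑ c, ∑ d, -(f c d * r) := by
  rw [neg_mul, sum2_mul, ← Finset.sum_neg_distrib]
  exact Finset.sum_congr rfl fun c _ => by rw [Finset.sum_neg_distrib]

lemma TLdecomp (hx : x ∈ Ω) (i j k : Fin n) :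
    ∑ a, ∑ b,
      (((-∑ c, ∑ d,
          (((-∑ e, ∑ f, ihess Φ x a e * ihess Φ x f c * pd3 Φ e f k x) * ihess Φ x d b
              + ihess Φ x a c
                * (-∑ e, ∑ f, ihess Φ x d e * ihess Φ x f b * pd3 Φ e f k x))
                * pd3 Φ c d j x
            + ihess Φ x a c * ihess Φ x d b * pd4 Φ c d j k x))
          * pd3 Φ b a i x
        + (-∑ c, ∑ d, ihess Φ x a c * ihess Φ x d b * pd3 Φ c d j x) * pd4 Φ b a i k x)
      + ((-∑ c, ∑ d, ihess Φ x a c * ihess Φ x d b * pd3 Φ c d k x) * pd4 Φ b a i j x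
        + ihess Φ x a b * pd5 Φ b a i j k x))
    = (∑ a, ∑ b, ∑ c, ∑ d, ∑ e, ∑ f,
        (ihess Φ x a e * ihess Φ x f c * pd3 Φ e f k x)
          * (ihess Φ x d b * (pd3 Φ c d j x * pd3 Φ b a i x)))
      + (∑ a, ∑ b, ∑ c, ∑ d, ∑ e, ∑ f,
        (ihess Φ x d e * ihess Φ x f b * pd3 Φ e f k x)
          * (ihess Φ x a c * (pd3 Φ c d j x * pd3 Φ b a i x)))
      - (∑ a, ∑ b, ∑ c, ∑ d,
          ihess Φ x a c * ihess Φ x d b * pd4 Φ c d j k x * pd3 Φ b a i x)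
      - (∑ a, ∑ b, ∑ c, ∑ d,
          ihess Φ x a c * ihess Φ x d b * pd3 Φ c d j x * pd4 Φ b a i k x)
      - (∑ a, ∑ b, ∑ c, ∑ d,
          ihess Φ x a c * ihess Φ x d b * pd3 Φ c d k x * pd4 Φ b a i j x)
      + ∑ a, ∑ b, ihess Φ x a b * pd5 Φ b a i j k x := by
  have per_ab : ∀ a b : Fin n,
      ((-∑ c, ∑ d,
          (((-∑ e, ∑ f, ihess Φ x a e * ihess Φ x f c * pd3 Φ e f k x) * ihess Φ x d b
              + ihess Φ x a c
                * (-∑ e, ∑ f, ihess Φ x d e * ihess Φ x f b * pd3 Φ e f k x))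
                * pd3 Φ c d j x
            + ihess Φ x a c * ihess Φ x d b * pd4 Φ c d j k x))
          * pd3 Φ b a i x
        + (-∑ c, ∑ d, ihess Φ x a c * ihess Φ x d b * pd3 Φ c d j x) * pd4 Φ b a i k x)
      + ((-∑ c, ∑ d, ihess Φ x a c * ihess Φ x d b * pd3 Φ c d k x) * pd4 Φ b a i j x
        + ihess Φ x a b * pd5 Φ b a i j k x)
      = ∑ c, ∑ d,
          ((((∑ e, ∑ f, (ihess Φ x a e * ihess Φ x f c * pd3 Φ e f k x)
              * (ihess Φ x d b * (pd3 Φ c d j x * pd3 Φ b a i x)))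
            + (∑ e, ∑ f, (ihess Φ x d e * ihess Φ x f b * pd3 Φ e f k x)
              * (ihess Φ x a c * (pd3 Φ c d j x * pd3 Φ b a i x)))
            - ihess Φ x a c * ihess Φ x d b * pd4 Φ c d j k x * pd3 Φ b a i x)
            - ihess Φ x a c * ihess Φ x d b * pd3 Φ c d j x * pd4 Φ b a i k x)
            - ihess Φ x a c * ihess Φ x d b * pd3 Φ c d k x * pd4 Φ b a i j x)
        + ihess Φ x a b * pd5 Φ b a i j k x := by
    intro a b
    have hT1 := neg_sum2_mul (f := fun c d =>
      (((-∑ e, ∑ f, ihess Φ x a e * ihess Φ x f c * pd3 Φ e f k x) * ihess Φ x d b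
        + ihess Φ x a c * (-∑ e, ∑ f, ihess Φ x d e * ihess Φ x f b * pd3 Φ e f k x))
          * pd3 Φ c d j x
        + ihess Φ x a c * ihess Φ x d b * pd4 Φ c d j k x)) (pd3 Φ b a i x)
    have hT2 := neg_sum2_mul (f := fun c d =>
      ihess Φ x a c * ihess Φ x d b * pd3 Φ c d j x) (pd4 Φ b a i k x)
    have hT3 := neg_sum2_mul (f := fun c d =>
      ihess Φ x a c * ihess Φ x d b * pd3 Φ c d k x) (pd4 Φ b a i j x)
    have hX : ∀ c d : Fin n,
        -(((((-∑ e, ∑ f, ihess Φ x a e * ihess Φ x f c * pd3 Φ e f k x) * ihess Φ x d b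
            + ihess Φ x a c
              * (-∑ e, ∑ f, ihess Φ x d e * ihess Φ x f b * pd3 Φ e f k x))
              * pd3 Φ c d j x
          + ihess Φ x a c * ihess Φ x d b * pd4 Φ c d j k x)) * pd3 Φ b a i x)
        = (∑ e, ∑ f, (ihess Φ x a e * ihess Φ x f c * pd3 Φ e f k x)
              * (ihess Φ x d b * (pd3 Φ c d j x * pd3 Φ b a i x)))
          + (∑ e, ∑ f, (ihess Φ x d e * ihess Φ x f b * pd3 Φ e f k x)
              * (ihess Φ x a c * (pd3 Φ c d j x * pd3 Φ b a i x)))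
          - ihess Φ x a c * ihess Φ x d b * pd4 Φ c d j k x * pd3 Φ b a i x := by
      intro c d
      have step1 :
          -(((((-∑ e, ∑ f, ihess Φ x a e * ihess Φ x f c * pd3 Φ e f k x) * ihess Φ x d b
              + ihess Φ x a c
                * (-∑ e, ∑ f, ihess Φ x d e * ihess Φ x f b * pd3 Φ e f k x))
                * pd3 Φ c d j x
            + ihess Φ x a c * ihess Φ x d b * pd4 Φ c d j k x)) * pd3 Φ b a i x)
          = (∑ e, ∑ f, ihess Φ x a e * ihess Φ x f c * pd3 Φ e f k x)
              * (ihess Φ x d b * (pd3 Φ c d j x * pd3 Φ b a i x))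
            + (∑ e, ∑ f, ihess Φ x d e * ihess Φ x f b * pd3 Φ e f k x)
              * (ihess Φ x a c * (pd3 Φ c d j x * pd3 Φ b a i x))
            - ihess Φ x a c * ihess Φ x d b * pd4 Φ c d j k x * pd3 Φ b a i x := by
        ring
      rw [step1, sum2_mul, sum2_mul]
    rw [hT1, hT2, hT3,
      Finset.sum_congr rfl (fun c _ => Finset.sum_congr rfl (fun d _ => hX c d))]
    simp only [Finset.sum_add_distrib, Finset.sum_sub_distrib, Finset.sum_neg_distrib]
    ring
  rw [Finset.sum_congr rfl (fun a _ => Finset.sum_congr rfl (fun b _ => per_ab a b))]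
  simp only [Finset.sum_add_distrib, Finset.sum_sub_distrib]

end mainsec5
section mainsec6
variable {n : ℕ} {Ω : Set (Fin n → ℝ)} {Φ V W : (Fin n → ℝ) → ℝ} {x : Fin n → ℝ}

lemma TRdecomp (i j k : Fin n) :
    (∑ s, ((pd4 Φ s i j k x * Wop Φ W s x
          + pd3 Φ s i j x * ∑ a, pd2 Φ a k x * pd2 W s a (grad Φ x))
        + (pd3 Φ s i k x * ∑ a, pd2 Φ a j x * pd2 W s a (grad Φ x)
          + pd2 Φ s i x * ∑ a, (pd3 Φ a j k x * pd2 W s a (grad Φ x)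
              + pd2 Φ a j x * ∑ c, pd2 Φ c k x * pd3 W s a c (grad Φ x)))))
    = (∑ s, pd4 Φ s i j k x * Wop Φ W s x)
      + (∑ s, ∑ a, pd3 Φ s i j x * (pd2 Φ a k x * pd2 W s a (grad Φ x)))
      + (∑ s, ∑ a, pd3 Φ s i k x * (pd2 Φ a j x * pd2 W s a (grad Φ x)))
      + (∑ s, ∑ a, pd2 Φ s i x * (pd3 Φ a j k x * pd2 W s a (grad Φ x)))
      + (∑ s, ∑ a, ∑ c, pd2 Φ s i x * (pd2 Φ a j x
          * (pd2 Φ c k x * pd3 W s a c (grad Φ x)))) := by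
  simp only [Finset.mul_sum, mul_add, Finset.sum_add_distrib]
  ring

lemma M1lem (hΩ : IsOpen Ω) (hΦ : ContDiffOn ℝ 5 Φ Ω)
    (hpos : ∀ x ∈ Ω, (hess Φ x).PosDef) (hx : x ∈ Ω) (i j k : Fin n) :
    ∑ a, ∑ b, ihess Φ x a b * pd5 Φ b a i j k x
      = ∑ p, ∑ q, ihess Φ x p q * pd5 Φ i j k p q x := by
  rw [Finset.sum_comm]
  refine Finset.sum_congr rfl fun p _ => Finset.sum_congr rfl fun q _ => ?_
  rw [K_symm hpos hx q p, (pd5_move hΩ hΦ le_rfl p q i j k) hx]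

lemma M2lem (hΩ : IsOpen Ω) (hΦ : ContDiffOn ℝ 5 Φ Ω) (hx : x ∈ Ω) (i j k : Fin n) :
    ∑ s, pd4 Φ s i j k x * Wop Φ W s x = ∑ p, Wop Φ W p x * pd4 Φ i j k p x := by
  refine Finset.sum_congr rfl fun s _ => ?_
  rw [(pd4_move hΩ hΦ (by norm_num) s i j k) hx]
  ring

lemma Mq1lem (hΩ : IsOpen Ω) (hΦ : ContDiffOn ℝ 5 Φ Ω)
    (hpos : ∀ x ∈ Ω, (hess Φ x).PosDef) (hx : x ∈ Ω) (i j k : Fin n) :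
    ∑ a, ∑ b, ∑ c, ∑ d, ihess Φ x a c * ihess Φ x d b * pd4 Φ c d j k x * pd3 Φ b a i x
      = ∑ a, ∑ b, ∑ p, ∑ q,
          pd3 Φ a b i x * ihess Φ x a p * ihess Φ x b q * pd4 Φ p q j k x := by
  refine Finset.sum_congr rfl fun a _ => Finset.sum_congr rfl fun b _ =>
    Finset.sum_congr rfl fun p _ => Finset.sum_congr rfl fun q _ => ?_
  rw [K_symm hpos hx q b, (pd3_swap12 hΩ hΦ (by norm_num) b a i) hx]
  ring

lemma Mq2lem (hΩ : IsOpen Ω) (hΦ : ContDiffOn ℝ 5 Φ Ω)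
    (hpos : ∀ x ∈ Ω, (hess Φ x).PosDef) (hx : x ∈ Ω) (i j k : Fin n) :
    ∑ a, ∑ b, ∑ c, ∑ d, ihess Φ x a c * ihess Φ x d b * pd3 Φ c d j x * pd4 Φ b a i k x
      = ∑ a, ∑ b, ∑ p, ∑ q,
          pd3 Φ a b j x * ihess Φ x a p * ihess Φ x b q * pd4 Φ p q i k x := by
  simp only [← Fintype.sum_prod_type']
  refine Fintype.sum_equiv
    (⟨fun y => (y.2.2.1, y.2.2.2, y.1, y.2.1), fun y => (y.2.2.1, y.2.2.2, y.1, y.2.1),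
      fun ⟨a,b,c,d⟩ => rfl, fun ⟨a,b,c,d⟩ => rfl⟩ :
      (Fin n × Fin n × Fin n × Fin n) ≃ (Fin n × Fin n × Fin n × Fin n)) _ _ ?_
  rintro ⟨a, b, c, d⟩
  show ihess Φ x a c * ihess Φ x d b * pd3 Φ c d j x * pd4 Φ b a i k x
    = pd3 Φ c d j x * ihess Φ x c a * ihess Φ x d b * pd4 Φ a b i k x
  rw [K_symm hpos hx a c, (pd4_swap12 hΩ hΦ (by norm_num) b a i k) hx]
  ring

lemma Mq3lem (hΩ : IsOpen Ω) (hΦ : ContDiffOn ℝ 5 Φ Ω)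
    (hpos : ∀ x ∈ Ω, (hess Φ x).PosDef) (hx : x ∈ Ω) (i j k : Fin n) :
    ∑ a, ∑ b, ∑ c, ∑ d, ihess Φ x a c * ihess Φ x d b * pd3 Φ c d k x * pd4 Φ b a i j x
      = ∑ a, ∑ b, ∑ p, ∑ q,
          pd3 Φ a b k x * ihess Φ x a p * ihess Φ x b q * pd4 Φ p q i j x := by
  simp only [← Fintype.sum_prod_type']
  refine Fintype.sum_equiv
    (⟨fun y => (y.2.2.1, y.2.2.2, y.1, y.2.1), fun y => (y.2.2.1, y.2.2.2, y.1, y.2.1),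
      fun ⟨a,b,c,d⟩ => rfl, fun ⟨a,b,c,d⟩ => rfl⟩ :
      (Fin n × Fin n × Fin n × Fin n) ≃ (Fin n × Fin n × Fin n × Fin n)) _ _ ?_
  rintro ⟨a, b, c, d⟩
  show ihess Φ x a c * ihess Φ x d b * pd3 Φ c d k x * pd4 Φ b a i j x
    = pd3 Φ c d k x * ihess Φ x c a * ihess Φ x d b * pd4 Φ a b i j x
  rw [K_symm hpos hx a c, (pd4_swap12 hΩ hΦ (by norm_num) b a i j) hx]
  ring

lemma Mc1lem (hΩ : IsOpen Ω) (hΦ : ContDiffOn ℝ 5 Φ Ω)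
    (hpos : ∀ x ∈ Ω, (hess Φ x).PosDef) (hx : x ∈ Ω) (i j k : Fin n) :
    ∑ a, ∑ b, ∑ c, ∑ d, ∑ e, ∑ f,
        (ihess Φ x a e * ihess Φ x f c * pd3 Φ e f k x)
          * (ihess Φ x d b * (pd3 Φ c d j x * pd3 Φ b a i x))
      = ∑ a, ∑ b, ∑ c, ∑ p, ∑ q, ∑ r,
          pd3 Φ p b i x * pd3 Φ q c j x * pd3 Φ r a k x
            * ihess Φ x a p * ihess Φ x b q * ihess Φ x c r := by
  simp only [← Fintype.sum_prod_type']
  refine Fintype.sum_equiv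
    (⟨fun y => (y.2.2.2.2.1, y.2.1, y.2.2.1, y.1, y.2.2.2.1, y.2.2.2.2.2),
      fun y => (y.2.2.2.1, y.2.1, y.2.2.1, y.2.2.2.2.1, y.1, y.2.2.2.2.2),
      fun ⟨a,b,c,d,e,f⟩ => rfl, fun ⟨a,b,c,d,e,f⟩ => rfl⟩ :
      (Fin n × Fin n × Fin n × Fin n × Fin n × Fin n)
        ≃ (Fin n × Fin n × Fin n × Fin n × Fin n × Fin n)) _ _ ?_
  rintro ⟨a, b, c, d, e, f⟩
  show (ihess Φ x a e * ihess Φ x f c * pd3 Φ e f k x)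
      * (ihess Φ x d b * (pd3 Φ c d j x * pd3 Φ b a i x))
    = pd3 Φ a b i x * pd3 Φ d c j x * pd3 Φ f e k x
        * ihess Φ x e a * ihess Φ x b d * ihess Φ x c f
  rw [K_symm hpos hx e a, K_symm hpos hx b d, K_symm hpos hx c f,
    (pd3_swap12 hΩ hΦ (by norm_num) e f k) hx,
    (pd3_swap12 hΩ hΦ (by norm_num) c d j) hx,
    (pd3_swap12 hΩ hΦ (by norm_num) b a i) hx]
  ring

lemma Mc2lem (hΩ : IsOpen Ω) (hΦ : ContDiffOn ℝ 5 Φ Ω)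
    (hpos : ∀ x ∈ Ω, (hess Φ x).PosDef) (hx : x ∈ Ω) (i j k : Fin n) :
    ∑ a, ∑ b, ∑ c, ∑ d, ∑ e, ∑ f,
        (ihess Φ x d e * ihess Φ x f b * pd3 Φ e f k x)
          * (ihess Φ x a c * (pd3 Φ c d j x * pd3 Φ b a i x))
      = ∑ a, ∑ b, ∑ c, ∑ p, ∑ q, ∑ r,
          pd3 Φ p b i x * pd3 Φ q c j x * pd3 Φ r a k x
            * ihess Φ x a p * ihess Φ x b q * ihess Φ x c r := by
  simp only [← Fintype.sum_prod_type']
  refine Fintype.sum_equiv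
    (⟨fun y => (y.2.2.2.2.2, y.1, y.2.2.2.1, y.2.1, y.2.2.1, y.2.2.2.2.1),
      fun y => (y.2.1, y.2.2.2.1, y.2.2.2.2.1, y.2.2.1, y.2.2.2.2.2, y.1),
      fun ⟨a,b,c,d,e,f⟩ => rfl, fun ⟨a,b,c,d,e,f⟩ => rfl⟩ :
      (Fin n × Fin n × Fin n × Fin n × Fin n × Fin n)
        ≃ (Fin n × Fin n × Fin n × Fin n × Fin n × Fin n)) _ _ ?_
  rintro ⟨a, b, c, d, e, f⟩
  show (ihess Φ x d e * ihess Φ x f b * pd3 Φ e f k x)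
      * (ihess Φ x a c * (pd3 Φ c d j x * pd3 Φ b a i x))
    = pd3 Φ b a i x * pd3 Φ c d j x * pd3 Φ e f k x
        * ihess Φ x f b * ihess Φ x a c * ihess Φ x d e
  ring

lemma Malem (hW : ContDiff ℝ 3 W) (i j k : Fin n) :
    ∑ s, ∑ a, pd2 Φ s i x * (pd3 Φ a j k x * pd2 W s a (grad Φ x))
      = ∑ s, ∑ a, pd2 W s a (grad Φ x) * pd2 Φ a i x * pd3 Φ s j k x := by
  rw [Finset.sum_comm]
  refine Finset.sum_congr rfl fun s _ => Finset.sum_congr rfl fun a _ => ?_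
  rw [pd2W_symm hW (grad Φ x) a s]
  ring

lemma Mblem (i j k : Fin n) :
    ∑ s, ∑ a, pd3 Φ s i j x * (pd2 Φ a k x * pd2 W s a (grad Φ x))
      = ∑ s, ∑ a, pd2 W s a (grad Φ x) * pd2 Φ a k x * pd3 Φ s i j x :=
  Finset.sum_congr rfl fun s _ => Finset.sum_congr rfl fun a _ => by ring

lemma Mclem (i j k : Fin n) :
    ∑ s, ∑ a, pd3 Φ s i k x * (pd2 Φ a j x * pd2 W s a (grad Φ x))
      = ∑ s, ∑ a, pd2 W s a (grad Φ x) * pd2 Φ a j x * pd3 Φ s i k x :=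
  Finset.sum_congr rfl fun s _ => Finset.sum_congr rfl fun a _ => by ring

lemma Mw3lem (i j k : Fin n) :
    ∑ s, ∑ a, ∑ c, pd2 Φ s i x * (pd2 Φ a j x * (pd2 Φ c k x * pd3 W s a c (grad Φ x)))
      = What3 Φ W i j k x := by
  unfold What3
  refine Finset.sum_congr rfl fun s _ => Finset.sum_congr rfl fun a _ =>
    Finset.sum_congr rfl fun c _ => by ring

end mainsec6
/-- the weighted Laplacian of the scalar `Φ_{ijk}` (fixed indices). -/
theorem stmt_4 {n : ℕ} (Ω : Set (Fin n → ℝ)) (hΩ : IsOpen Ω)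
    (Φ V W : (Fin n → ℝ) → ℝ)
    (hΦ : ContDiffOn ℝ 5 Φ Ω) (hΦconv : ConvexOn ℝ Ω Φ)
    (hpos : ∀ x ∈ Ω, (hess Φ x).PosDef)
    (hV : ContDiffOn ℝ 3 V Ω) (hW : ContDiff ℝ 3 W)
    (hMA : ∀ x ∈ Ω, Real.exp (-V x) = Real.exp (-W (grad Φ x)) * (hess Φ x).det) :
    ∀ x ∈ Ω, ∀ i j k : Fin n,
      (∑ p, ∑ q, ihess Φ x p q * pd5 Φ i j k p q x)
        - (∑ p, Wop Φ W p x * pd4 Φ i j k p x)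
      = -(pd3 V i j k x) + What3 Φ W i j k x
        + ((∑ s, ∑ a, pd2 W s a (grad Φ x) * pd2 Φ a i x * pd3 Φ s j k x)
          + (∑ s, ∑ a, pd2 W s a (grad Φ x) * pd2 Φ a j x * pd3 Φ s i k x)
          + (∑ s, ∑ a, pd2 W s a (grad Φ x) * pd2 Φ a k x * pd3 Φ s i j x))
        + ((∑ a, ∑ b, ∑ p, ∑ q, pd3 Φ a b i x * ihess Φ x a p * ihess Φ x b q * pd4 Φ p q j k x)
          + (∑ a, ∑ b, ∑ p, ∑ q, pd3 Φ a b j x * ihess Φ x a p * ihess Φ x b q * pd4 Φ p q i k x)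
          + (∑ a, ∑ b, ∑ p, ∑ q, pd3 Φ a b k x * ihess Φ x a p * ihess Φ x b q * pd4 Φ p q i j x))
        - 2 * ∑ a, ∑ b, ∑ c, ∑ p, ∑ q, ∑ r,
            pd3 Φ p b i x * pd3 Φ q c j x * pd3 Φ r a k x
              * ihess Φ x a p * ihess Φ x b q * ihess Φ x c r := by

  intro x hx i j k
  have hE3 := E3 hΩ hΦ hpos hV hW hMA hx i j k
  rw [TLdecomp hx i j k, TRdecomp i j k] at hE3
  have m1 := M1lem hΩ hΦ hpos hx i j k
  have m2 := M2lem (W := W) hΩ hΦ hx i j k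
  have mq1 := Mq1lem hΩ hΦ hpos hx i j k
  have mq2 := Mq2lem hΩ hΦ hpos hx i j k
  have mq3 := Mq3lem hΩ hΦ hpos hx i j k
  have mc1 := Mc1lem hΩ hΦ hpos hx i j k
  have mc2 := Mc2lem hΩ hΦ hpos hx i j k
  have ma := Malem (Φ := Φ) (x := x) hW i j k
  have mb := Mblem (Φ := Φ) (W := W) (x := x) i j k
  have mc := Mclem (Φ := Φ) (W := W) (x := x) i j k
  have mw := Mw3lem (Φ := Φ) (W := W) (x := x) i j k
  linarith [hE3, m1, m2, mq1, mq2, mq3, mc1, mc2, ma, mb, mc, mw]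
end
end

section
/- Let Ω ⊆ ℝⁿ be an open convex cone, α ≠ 0, and let Φ : Ω → ℝ be C³ with positive definite Hessian which is logarithmically homogeneous: Φ(λx) = Φ(x) + 2(n/α) log λ for all λ > 0 and x ∈ Ω. Then the Riemann curvature tensor of the Hessian metric h = D²Φ contracted twice with the position vector vanishes: for every x ∈ Ω and all indices i, j, Σ_{k,l} R_{ikjl}(x) x^k x^l = 0, where R_{ikjl} := ¼ Σ_{a,m} Φ^{am} (Φ_{ila} Φ_{mkj} − Φ_{ija} Φ_{mkl}). -/
noncomputable section
open scoped BigOperators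
open Filter MeasureTheory

section CurvatureHelpers

variable {n : ℕ}

lemma sum_single_smul (x : Fin n → ℝ) : ∑ i, x i • (Pi.single i 1 : Fin n → ℝ) = x := by
  have : ∀ i, x i • (Pi.single i 1 : Fin n → ℝ) = Pi.single i (x i) := by
    intro i; ext j; by_cases h : j = i <;> simp [Pi.single_apply, h]
  simp only [this]
  exact Finset.univ_sum_single x

lemma fderiv_eval_self (f : (Fin n → ℝ) → ℝ) (x : Fin n → ℝ) :
    fderiv ℝ f x x = ∑ i, x i * fderiv ℝ f x (Pi.single i 1) := by
  calc fderiv ℝ f x x = fderiv ℝ f x (∑ i, x i • (Pi.single i 1 : Fin n → ℝ)) := by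
        rw [sum_single_smul]
    _ = ∑ i, x i * fderiv ℝ f x (Pi.single i 1) := by
        rw [map_sum]; simp [smul_eq_mul]

lemma euler_lemma {f : (Fin n → ℝ) → ℝ} {x : Fin n → ℝ} (hf : DifferentiableAt ℝ f x)
    {g : ℝ → ℝ} {g' : ℝ} (hg : HasDerivAt g g' 1)
    (h : ∀ t : ℝ, 0 < t → f (t • x) = g t) :
    ∑ i, x i * fderiv ℝ f x (Pi.single i 1) = g' := by
  have hs : HasDerivAt (fun t : ℝ => t • x) x 1 := by
    simpa using (hasDerivAt_id (1:ℝ)).smul_const x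
  have h1 : HasDerivAt (fun t : ℝ => f (t • x)) (fderiv ℝ f x x) 1 := by
    have hfd : HasFDerivAt f (fderiv ℝ f x) ((fun t : ℝ => t • x) 1) := by
      simpa using hf.hasFDerivAt
    exact hfd.comp_hasDerivAt 1 hs
  have heq : (fun t : ℝ => f (t • x)) =ᶠ[nhds (1:ℝ)] g := by
    filter_upwards [eventually_gt_nhds (show (0:ℝ) < 1 by norm_num)] with t ht
    exact h t ht
  have h2 : HasDerivAt (fun t : ℝ => f (t • x)) g' 1 := hg.congr_of_eventuallyEq heq
  rw [← fderiv_eval_self]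
  exact h1.unique h2

lemma homog_fderiv {Ω : Set (Fin n → ℝ)} (hΩ : IsOpen Ω) {f : (Fin n → ℝ) → ℝ}
    (hf : ∀ y ∈ Ω, DifferentiableAt ℝ f y) {t c d : ℝ}
    (h : ∀ y ∈ Ω, f (t • y) = c * f y + d) {x : Fin n → ℝ} (hx : x ∈ Ω) (hxt : t • x ∈ Ω)
    (v : Fin n → ℝ) :
    t * fderiv ℝ f (t • x) v = c * fderiv ℝ f x v := by
  set L : (Fin n → ℝ) →L[ℝ] (Fin n → ℝ) := t • ContinuousLinearMap.id ℝ (Fin n → ℝ) with hL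
  have hLd : HasFDerivAt (fun y : Fin n → ℝ => t • y) L x := by
    simpa [hL] using L.hasFDerivAt (x := x)
  have h1 : HasFDerivAt (fun y => f (t • y)) ((fderiv ℝ f (t • x)).comp L) x :=
    (hf _ hxt).hasFDerivAt.comp x hLd
  have h2 : HasFDerivAt (fun y => c * f y + d) (c • fderiv ℝ f x) x := by
    simpa using ((hf _ hx).hasFDerivAt.const_mul c).add_const d
  have heq : (fun y => f (t • y)) =ᶠ[nhds x] fun y => c * f y + d :=
    Filter.eventuallyEq_of_mem (hΩ.mem_nhds hx) h
  have hkey : (fderiv ℝ f (t • x)).comp L = c • fderiv ℝ f x :=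
    (h1.congr_of_eventuallyEq heq.symm).unique h2
  have := congrFun (congrArg DFunLike.coe hkey) v
  simpa [hL, smul_eq_mul, mul_comm] using this

lemma sum_swap4 (f : Fin n → Fin n → Fin n → Fin n → ℝ) :
    ∑ k, ∑ l, ∑ a, ∑ m, f k l a m = ∑ a, ∑ m, ∑ k, ∑ l, f k l a m := by
  calc ∑ k, ∑ l, ∑ a, ∑ m, f k l a m
      = ∑ k, ∑ a, ∑ l, ∑ m, f k l a m :=
        Finset.sum_congr rfl fun k _ => Finset.sum_comm
    _ = ∑ a, ∑ k, ∑ l, ∑ m, f k l a m := Finset.sum_comm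
    _ = ∑ a, ∑ k, ∑ m, ∑ l, f k l a m :=
        Finset.sum_congr rfl fun a _ => Finset.sum_congr rfl fun k _ => Finset.sum_comm
    _ = ∑ a, ∑ m, ∑ k, ∑ l, f k l a m :=
        Finset.sum_congr rfl fun a _ => Finset.sum_comm

end CurvatureHelpers

/-- for logarithmically homogeneous `Φ` on a cone, the Riemann tensor of the
Hessian metric contracted twice with the position vector vanishes: `Σ R_{ikjl} x^k x^l = 0`. -/
theorem stmt_11 {n : ℕ} (Ω : Set (Fin n → ℝ)) (hΩ : IsOpen Ω) (hΩconv : Convex ℝ Ω)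
    (hcone : ∀ x ∈ Ω, ∀ t : ℝ, 0 < t → t • x ∈ Ω)
    (α : ℝ) (hα : α ≠ 0) (Φ : (Fin n → ℝ) → ℝ)
    (hΦ : ContDiffOn ℝ 3 Φ Ω)
    (hpos : ∀ x ∈ Ω, (hess Φ x).PosDef)
    (hhom : ∀ x ∈ Ω, ∀ t : ℝ, 0 < t →
      Φ (t • x) = Φ x + 2 * ((n : ℝ) / α) * Real.log t) :
    ∀ x ∈ Ω, ∀ i j : Fin n,
      ∑ k, ∑ l, Rcal Φ i k j l x * x k * x l = 0 := by
  intro x hx i j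
  -- regularity
  have cΦ : ∀ y ∈ Ω, ContDiffAt ℝ 3 Φ y := fun y hy => (hΦ y hy).contDiffAt (hΩ.mem_nhds hy)
  have dΦ : ∀ y ∈ Ω, DifferentiableAt ℝ Φ y := fun y hy =>
    (cΦ y hy).differentiableAt (by norm_num)
  have cpd : ∀ (p : Fin n), ∀ y ∈ Ω, ContDiffAt ℝ 2 (pd Φ p) y := by
    intro p y hy
    have h1 : ContDiffAt ℝ 2 (fderiv ℝ Φ) y := (cΦ y hy).fderiv_right (by norm_num)
    have h2 := (ContinuousLinearMap.apply ℝ ℝ ((Pi.single p 1 : Fin n → ℝ))).contDiff.comp_contDiffAt y h1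
    exact h2
  have dpd : ∀ (p : Fin n), ∀ y ∈ Ω, DifferentiableAt ℝ (pd Φ p) y := fun p y hy =>
    (cpd p y hy).differentiableAt (by norm_num)
  have cpd2 : ∀ (p q : Fin n), ∀ y ∈ Ω, ContDiffAt ℝ 1 (pd2 Φ p q) y := by
    intro p q y hy
    have h1 : ContDiffAt ℝ 1 (fderiv ℝ (pd Φ p)) y := (cpd p y hy).fderiv_right (by norm_num)
    have h2 := (ContinuousLinearMap.apply ℝ ℝ ((Pi.single q 1 : Fin n → ℝ))).contDiff.comp_contDiffAt y h1
    exact h2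
  have dpd2 : ∀ (p q : Fin n), ∀ y ∈ Ω, DifferentiableAt ℝ (pd2 Φ p q) y := fun p q y hy =>
    (cpd2 p q y hy).differentiableAt one_ne_zero
  -- homogeneity of first derivatives: degree -1
  have hom1 : ∀ (p : Fin n), ∀ y ∈ Ω, ∀ t : ℝ, 0 < t → pd Φ p (t • y) = t⁻¹ * pd Φ p y := by
    intro p y hy t ht
    have h0 : ∀ z ∈ Ω, Φ (t • z) = 1 * Φ z + 2 * ((n : ℝ) / α) * Real.log t := by
      intro z hz; rw [one_mul]; exact hhom z hz t ht
    have h1 := homog_fderiv hΩ dΦ h0 hy (hcone y hy t ht) (Pi.single p 1)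
    have h2 : t * pd Φ p (t • y) = pd Φ p y := by simpa [pd] using h1
    rw [← h2, inv_mul_cancel_left₀ ht.ne']
  -- homogeneity of second derivatives: degree -2
  have hom2 : ∀ (p q : Fin n), ∀ y ∈ Ω, ∀ t : ℝ, 0 < t →
      pd2 Φ p q (t • y) = t⁻¹ * (t⁻¹ * pd2 Φ p q y) := by
    intro p q y hy t ht
    have h0 : ∀ z ∈ Ω, pd Φ p (t • z) = t⁻¹ * pd Φ p z + 0 := by
      intro z hz; rw [add_zero]; exact hom1 p z hz t ht
    have h1 := homog_fderiv hΩ (dpd p) h0 hy (hcone y hy t ht) (Pi.single q 1)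
    have h2 : t * pd2 Φ p q (t • y) = t⁻¹ * pd2 Φ p q y := by simpa [pd2, pd] using h1
    rw [← h2, inv_mul_cancel_left₀ ht.ne']
  -- Euler identities
  have E2 : ∀ (p : Fin n), ∑ k, x k * pd2 Φ p k x = -pd Φ p x := by
    intro p
    have hg : HasDerivAt (fun t : ℝ => t⁻¹ * pd Φ p x) (-pd Φ p x) 1 := by
      have := (hasDerivAt_inv (one_ne_zero (α := ℝ))).mul_const (pd Φ p x)
      simpa using this
    have h := euler_lemma (dpd p x hx) hg (fun t ht => hom1 p x hx t ht)
    simpa [pd2, pd] using h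
  have E3 : ∀ (p q : Fin n), ∑ k, x k * pd3 Φ p q k x = -2 * pd2 Φ p q x := by
    intro p q
    have hg : HasDerivAt (fun t : ℝ => t⁻¹ * (t⁻¹ * pd2 Φ p q x)) (-2 * pd2 Φ p q x) 1 := by
      have h1 := (hasDerivAt_inv (one_ne_zero (α := ℝ))).mul
        ((hasDerivAt_inv (one_ne_zero (α := ℝ))).mul_const (pd2 Φ p q x))
      refine h1.congr_deriv ?_
      ring
    have h := euler_lemma (dpd2 p q x hx) hg (fun t ht => hom2 p q x hx t ht)
    simpa [pd3, pd] using h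
  -- symmetry of third derivatives in last two indices
  have sym3 : ∀ (p a b : Fin n), pd3 Φ p a b x = pd3 Φ p b a x := by
    intro p a b
    have hf2 : ContDiffAt ℝ 2 (pd Φ p) x := cpd p x hx
    have hsym := hf2.isSymmSndFDerivAt (by simp)
    have hd : DifferentiableAt ℝ (fderiv ℝ (pd Φ p)) x :=
      ((hf2.fderiv_right (le_refl _)) : ContDiffAt ℝ 1 (fderiv ℝ (pd Φ p)) x).differentiableAt one_ne_zero
    have key : ∀ v w : Fin n → ℝ,
        fderiv ℝ (fun z => fderiv ℝ (pd Φ p) z v) x w = fderiv ℝ (fderiv ℝ (pd Φ p)) x w v := by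
      intro v w
      have h2 := fderiv_clm_apply hd (differentiableAt_const v)
      have h3 := congrFun (congrArg DFunLike.coe h2) w
      simpa using h3
    have e1 : pd3 Φ p a b x = fderiv ℝ (fderiv ℝ (pd Φ p)) x (Pi.single b 1) (Pi.single a 1) :=
      key _ _
    have e2 : pd3 Φ p b a x = fderiv ℝ (fderiv ℝ (pd Φ p)) x (Pi.single a 1) (Pi.single b 1) :=
      key _ _
    rw [e1, e2, hsym _ _]
  -- reformulated Euler identities
  have e3last : ∀ (p q : Fin n), ∑ l, pd3 Φ p q l x * x l = -2 * pd2 Φ p q x := by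
    intro p q
    rw [show ∑ l, pd3 Φ p q l x * x l = ∑ l, x l * pd3 Φ p q l x from
      Finset.sum_congr rfl fun l _ => mul_comm _ _]
    exact E3 p q
  have e3mid : ∀ (p a : Fin n), ∑ l, pd3 Φ p l a x * x l = -2 * pd2 Φ p a x := by
    intro p a
    rw [show ∑ l, pd3 Φ p l a x * x l = ∑ l, pd3 Φ p a l x * x l from
      Finset.sum_congr rfl fun l _ => by rw [sym3 p l a]]
    exact e3last p a
  have e2' : ∀ (p : Fin n), ∑ k, pd2 Φ p k x * x k = -pd Φ p x := by
    intro p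
    rw [show ∑ k, pd2 Φ p k x * x k = ∑ k, x k * pd2 Φ p k x from
      Finset.sum_congr rfl fun k _ => mul_comm _ _]
    exact E2 p
  -- matrix identities
  have hdet : IsUnit (hess Φ x).det := isUnit_iff_ne_zero.mpr (hpos x hx).det_pos.ne'
  have invh : ∀ (a b : Fin n), ∑ m, ihess Φ x a m * pd2 Φ m b x = if a = b then 1 else 0 := by
    intro a b
    have h := Matrix.nonsing_inv_mul (hess Φ x) hdet
    have h2 := congrFun (congrFun h a) b
    rw [Matrix.mul_apply] at h2
    simpa [ihess, hess, Matrix.one_apply] using h2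
  have gradinv : ∀ (a : Fin n), ∑ m, ihess Φ x a m * pd Φ m x = -x a := by
    intro a
    have h1 : ∀ m : Fin n, pd Φ m x = -∑ k, pd2 Φ m k x * x k := by
      intro m; rw [e2' m, neg_neg]
    calc ∑ m, ihess Φ x a m * pd Φ m x
        = ∑ m, ∑ k, -(ihess Φ x a m * pd2 Φ m k x * x k) := by
          refine Finset.sum_congr rfl fun m _ => ?_
          rw [h1 m, mul_neg, Finset.mul_sum, ← Finset.sum_neg_distrib]
          exact Finset.sum_congr rfl fun k _ => by ring
      _ = ∑ k, ∑ m, -(ihess Φ x a m * pd2 Φ m k x * x k) := Finset.sum_comm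
      _ = ∑ k, -((∑ m, ihess Φ x a m * pd2 Φ m k x) * x k) := by
          refine Finset.sum_congr rfl fun k _ => ?_
          rw [Finset.sum_mul, ← Finset.sum_neg_distrib]
      _ = ∑ k, -((if a = k then 1 else 0) * x k) := by
          refine Finset.sum_congr rfl fun k _ => ?_
          rw [invh a k]
      _ = -x a := by simp
  -- the main computation
  have step1 : ∀ (a m k : Fin n),
      ∑ l, ihess Φ x a m * (pd3 Φ i l a x * pd3 Φ m k j x - pd3 Φ i j a x * pd3 Φ m k l x)
        * x k * x l
      = (ihess Φ x a m * pd3 Φ m k j x * x k) * (-2 * pd2 Φ i a x)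
        - (ihess Φ x a m * pd3 Φ i j a x * x k) * (-2 * pd2 Φ m k x) := by
    intro a m k
    rw [show (∑ l, ihess Φ x a m * (pd3 Φ i l a x * pd3 Φ m k j x
          - pd3 Φ i j a x * pd3 Φ m k l x) * x k * x l)
        = ∑ l, ((ihess Φ x a m * pd3 Φ m k j x * x k) * (pd3 Φ i l a x * x l)
          - (ihess Φ x a m * pd3 Φ i j a x * x k) * (pd3 Φ m k l x * x l)) from
      Finset.sum_congr rfl fun l _ => by ring]
    rw [Finset.sum_sub_distrib, ← Finset.mul_sum, ← Finset.mul_sum, e3mid i a, e3last m k]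
  have step2 : ∀ (a m : Fin n),
      ∑ k, ((ihess Φ x a m * pd3 Φ m k j x * x k) * (-2 * pd2 Φ i a x)
        - (ihess Φ x a m * pd3 Φ i j a x * x k) * (-2 * pd2 Φ m k x))
      = (4 : ℝ) * (pd2 Φ i a x * (ihess Φ x a m * pd2 Φ m j x))
        - 2 * (pd3 Φ i j a x * (ihess Φ x a m * pd Φ m x)) := by
    intro a m
    rw [show (∑ k, ((ihess Φ x a m * pd3 Φ m k j x * x k) * (-2 * pd2 Φ i a x)
          - (ihess Φ x a m * pd3 Φ i j a x * x k) * (-2 * pd2 Φ m k x)))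
        = ∑ k, ((-2 * pd2 Φ i a x * ihess Φ x a m) * (pd3 Φ m k j x * x k)
          + (2 * ihess Φ x a m * pd3 Φ i j a x) * (pd2 Φ m k x * x k)) from
      Finset.sum_congr rfl fun k _ => by ring]
    rw [Finset.sum_add_distrib, ← Finset.mul_sum, ← Finset.mul_sum, e3mid m j, e2' m]
    ring
  calc ∑ k, ∑ l, Rcal Φ i k j l x * x k * x l
      = ∑ k, ∑ l, (1/4 : ℝ) * ∑ a, ∑ m, ihess Φ x a m
          * (pd3 Φ i l a x * pd3 Φ m k j x - pd3 Φ i j a x * pd3 Φ m k l x) * x k * x l := by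
        refine Finset.sum_congr rfl fun k _ => Finset.sum_congr rfl fun l _ => ?_
        rw [Rcal, mul_assoc, mul_assoc]
        congr 1
        simp only [Finset.sum_mul, mul_assoc]
    _ = (1/4 : ℝ) * ∑ k, ∑ l, ∑ a, ∑ m, ihess Φ x a m
          * (pd3 Φ i l a x * pd3 Φ m k j x - pd3 Φ i j a x * pd3 Φ m k l x) * x k * x l := by
        simp only [← Finset.mul_sum]
    _ = (1/4 : ℝ) * ∑ a, ∑ m, ∑ k, ∑ l, ihess Φ x a m
          * (pd3 Φ i l a x * pd3 Φ m k j x - pd3 Φ i j a x * pd3 Φ m k l x) * x k * x l := by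
        rw [sum_swap4]
    _ = (1/4 : ℝ) * ∑ a, ∑ m, ((4 : ℝ) * (pd2 Φ i a x * (ihess Φ x a m * pd2 Φ m j x))
          - 2 * (pd3 Φ i j a x * (ihess Φ x a m * pd Φ m x))) := by
        refine congrArg _ (Finset.sum_congr rfl fun a _ => Finset.sum_congr rfl fun m _ => ?_)
        rw [Finset.sum_congr rfl fun k _ => step1 a m k, step2 a m]
    _ = (1/4 : ℝ) * ((4 : ℝ) * ∑ a, pd2 Φ i a x * (∑ m, ihess Φ x a m * pd2 Φ m j x)
          - 2 * ∑ a, pd3 Φ i j a x * (∑ m, ihess Φ x a m * pd Φ m x)) := by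
        simp only [Finset.sum_sub_distrib, ← Finset.mul_sum]
    _ = (1/4 : ℝ) * ((4 : ℝ) * ∑ a, pd2 Φ i a x * (if a = j then 1 else 0)
          - 2 * ∑ a, pd3 Φ i j a x * (-x a)) := by
        have h1 : ∀ a : Fin n, pd2 Φ i a x * (∑ m, ihess Φ x a m * pd2 Φ m j x)
            = pd2 Φ i a x * (if a = j then 1 else 0) := fun a => by rw [invh a j]
        have h2 : ∀ a : Fin n, pd3 Φ i j a x * (∑ m, ihess Φ x a m * pd Φ m x)
            = pd3 Φ i j a x * (-x a) := fun a => by rw [gradinv a]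
        rw [Finset.sum_congr rfl fun a _ => h1 a, Finset.sum_congr rfl fun a _ => h2 a]
    _ = (1/4 : ℝ) * ((4 : ℝ) * pd2 Φ i j x - 2 * (2 * pd2 Φ i j x)) := by
        congr 1
        congr 1
        · congr 1
          simp [mul_ite]
        · congr 1
          rw [show (∑ a, pd3 Φ i j a x * (-x a)) = -∑ a, pd3 Φ i j a x * x a from by
            rw [← Finset.sum_neg_distrib]; exact Finset.sum_congr rfl fun a _ => by ring]
          rw [e3last i j]; ring
    _ = 0 := by ring
end
end
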